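/- arXiv:1802.03948 — 5 statements merged into one kernel-verified Lean document; each statement's English description precedes it below -/
import Mathlib

section
/- For all real x with −1 < x < 1 and all n ≥ 1, |P_n'(x)| ≤ (2^{3/2}/√π) · √n / (1 − x²)^{3/4}. -/
open Polynomial in
noncomputable def legendre : ℕ → Polynomial ℝ
  | 0 => 1
  | 1 => X
  | (n + 2) =>
      C ((2 * (n : ℝ) + 3) / ((n : ℝ) + 2)) * (X * legendre (n + 1))
        - C (((n : ℝ) + 1) / ((n : ℝ) + 2)) * legendre n

open Polynomial

lemma legendre_rec (n : ℕ) :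
    C ((n:ℝ)+2) * legendre (n+2)
      = C (2*(n:ℝ)+3) * (X * legendre (n+1)) - C ((n:ℝ)+1) * legendre n := by
  have h2 : ((n:ℝ)+2) ≠ 0 := by positivity
  rw [legendre, mul_sub]
  congr 1
  · rw [← mul_assoc, ← C_mul, mul_div_cancel₀ _ h2]
  · rw [← mul_assoc, ← C_mul, mul_div_cancel₀ _ h2]

lemma legendre_JK (n : ℕ) :
    derivative (legendre (n+1)) = X * derivative (legendre n) + C ((n:ℝ)+1) * legendre n ∧
    X * derivative (legendre (n+1)) - derivative (legendre n) = C ((n:ℝ)+1) * legendre (n+1) := by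
  induction n with
  | zero => constructor <;> simp [legendre]
  | succ n ih =>
    obtain ⟨hJ, hK⟩ := ih
    have h2 : (C ((n:ℝ)+2)) ≠ 0 := by rw [Ne, C_eq_zero]; positivity
    have hrec := legendre_rec n
    have hd := congrArg derivative hrec
    simp only [derivative_mul, derivative_C, derivative_X, zero_mul, zero_add, one_mul,
      derivative_sub] at hd
    constructor
    · apply mul_left_cancel₀ h2
      push_cast
      simp only [C_add, C_mul, C_1, map_ofNat] at *
      linear_combination hd + (C (n:ℝ) + 1) * hK
    · apply mul_left_cancel₀ h2
      push_cast
      simp only [C_add, C_mul, C_1, map_ofNat] at *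
      linear_combination X * hd - (C (n:ℝ) + 2) * hrec - (C (n:ℝ) + 2) * hJ
        + (2 * C (n:ℝ) + 3) * X * hK

lemma legendre_J (n : ℕ) :
    derivative (legendre (n+1)) = X * derivative (legendre n) + C ((n:ℝ)+1) * legendre n :=
  (legendre_JK n).1

lemma legendre_K (n : ℕ) :
    X * derivative (legendre (n+1)) - derivative (legendre n) = C ((n:ℝ)+1) * legendre (n+1) :=
  (legendre_JK n).2

lemma legendre_I (n : ℕ) :
    (1 - X^2) * derivative (legendre (n+1))
      = C ((n:ℝ)+1) * (legendre n - X * legendre (n+1)) := by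
  have hJ := legendre_J n
  have hK := legendre_K n
  simp only [C_add, C_mul, C_1, map_ofNat] at *
  linear_combination hJ - X * hK

lemma legendre_ODE (n : ℕ) :
    (1 - X^2) * derivative (derivative (legendre n)) - 2 * X * derivative (legendre n)
      + C ((n:ℝ)*((n:ℝ)+1)) * legendre n = 0 := by
  cases n with
  | zero => simp [legendre]
  | succ m =>
    have hK := legendre_K m
    have hdI := congrArg derivative (legendre_I m)
    simp only [derivative_mul, derivative_sub, derivative_one, derivative_C, derivative_X,
      derivative_pow, Nat.cast_ofNat, pow_one, zero_mul, zero_add, one_mul, zero_sub, mul_one] at hdI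
    push_cast
    simp only [C_add, C_mul, C_1, map_ofNat] at *
    linear_combination hdI - (C (m:ℝ) + 1) * hK

lemma legendre_ODE' (n : ℕ) :
    (1 - X^2) * derivative (derivative (derivative (legendre n)))
      - 4 * X * derivative (derivative (legendre n))
      + C ((n:ℝ)*((n:ℝ)+1) - 2) * derivative (legendre n) = 0 := by
  have hd := congrArg derivative (legendre_ODE n)
  simp only [derivative_add, derivative_sub, derivative_mul, derivative_one, derivative_C,
    derivative_X, derivative_pow, derivative_ofNat, Nat.cast_ofNat, pow_one, zero_mul, zero_add, one_mul,
    zero_sub, mul_one, derivative_zero] at hd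
  simp only [C_sub, C_add, C_mul, C_1, map_ofNat] at *
  linear_combination hd

lemma legendre_eval_one (n : ℕ) : (legendre n).eval 1 = 1 := by
  induction n using Nat.twoStepInduction with
  | zero => simp [legendre]
  | one => simp [legendre]
  | more n ih2 ih1 =>
    have h2 : ((n:ℝ)+2) ≠ 0 := by positivity
    simp only [legendre, eval_sub, eval_mul, eval_C, eval_X, ih1, ih2, mul_one, one_mul]
    field_simp
    ring

lemma legendre_comp_neg (n : ℕ) : (legendre n).comp (-X) = C ((-1:ℝ)^n) * legendre n := by
  induction n using Nat.twoStepInduction with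
  | zero => simp [legendre]
  | one => simp [legendre]
  | more n ih2 ih1 =>
    simp only [legendre, sub_comp, mul_comp, C_comp, X_comp, ih1, ih2]
    simp only [map_pow, map_neg, C_1]
    ring

lemma legendre_eval_neg (n : ℕ) (x : ℝ) :
    (legendre n).eval (-x) = (-1:ℝ)^n * (legendre n).eval x := by
  have h := congrArg (eval x) (legendre_comp_neg n)
  simpa [eval_comp] using h

lemma legendre_deriv_comp_neg (n : ℕ) :
    (derivative (legendre n)).comp (-X) = -(C ((-1:ℝ)^n)) * derivative (legendre n) := by
  have h := congrArg derivative (legendre_comp_neg n)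
  rw [derivative_comp] at h
  simp only [derivative_neg, derivative_X, derivative_mul, derivative_C, zero_mul, zero_add] at h
  have : -((derivative (legendre n)).comp (-X)) = C ((-1:ℝ)^n) * derivative (legendre n) := by
    rw [← h]; ring
  linear_combination -this

lemma legendre_deriv_eval_neg (n : ℕ) (x : ℝ) :
    (derivative (legendre n)).eval (-x) = -((-1:ℝ)^n) * (derivative (legendre n)).eval x := by
  have h := congrArg (eval x) (legendre_deriv_comp_neg n)
  simpa [eval_comp] using h

lemma legendre_eval_zero_odd (m : ℕ) : (legendre (2*m+1)).eval 0 = 0 := by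
  induction m with
  | zero => simp [legendre]
  | succ m ih =>
    have : 2*(m+1)+1 = (2*m+1)+2 := by ring
    rw [this]
    simp only [legendre, eval_sub, eval_mul, eval_C, eval_X, zero_mul, mul_zero, ih, sub_zero]

lemma legendre_eval_zero_rec (n : ℕ) :
    (legendre (n+2)).eval 0 = -(((n:ℝ)+1)/((n:ℝ)+2)) * (legendre n).eval 0 := by
  simp only [legendre, eval_sub, eval_mul, eval_C, eval_X, zero_mul, mul_zero]
  ring

lemma legendre_eval_zero_sq_le : ∀ m : ℕ, 1 ≤ m →
    ((legendre (2*m)).eval 0)^2 ≤ 3/(8*(m:ℝ)+4) := by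
  intro m hm
  induction m with
  | zero => omega
  | succ m ih =>
    rcases Nat.eq_or_lt_of_le hm with h1 | h1
    · have hm0 : m = 0 := by omega
      subst hm0
      have : (legendre 2).eval 0 = -(1/2) := by norm_num [legendre]
      norm_num [this]
    · have hm1 : 1 ≤ m := by omega
      have ih' := ih hm1
      have hrec := legendre_eval_zero_rec (2*m)
      rw [show 2*(m+1) = 2*m+2 from by ring, hrec]
      push_cast
      push_cast at ih'
      set b := (legendre (2*m)).eval 0 with hb
      have key : (2*(m:ℝ)+1)^2/(2*(m:ℝ)+2)^2 * (3/(8*(m:ℝ)+4)) ≤ 3/(8*((m:ℝ)+1)+4) := by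
        rw [div_mul_div_comm, div_le_div_iff₀ (by positivity) (by positivity)]
        nlinarith [Nat.cast_nonneg (α := ℝ) m]
      calc (-((2*(m:ℝ)+1)/(2*(m:ℝ)+2)) * b)^2
          = (2*(m:ℝ)+1)^2/(2*(m:ℝ)+2)^2 * b^2 := by
            field_simp
        _ ≤ (2*(m:ℝ)+1)^2/(2*(m:ℝ)+2)^2 * (3/(8*(m:ℝ)+4)) :=
            mul_le_mul_of_nonneg_left ih' (by positivity)
        _ ≤ 3/(8*((m:ℝ)+1)+4) := key

lemma legendre_deriv_eval_zero (n : ℕ) :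
    (derivative (legendre (n+1))).eval 0 = ((n:ℝ)+1) * (legendre n).eval 0 := by
  have h := congrArg (eval 0) (legendre_J n)
  simpa using h

lemma legendre_deriv2_eval_zero (n : ℕ) :
    (derivative (derivative (legendre n))).eval 0
      = -((n:ℝ)*((n:ℝ)+1)) * (legendre n).eval 0 := by
  have h := congrArg (eval 0) (legendre_ODE n)
  simp only [eval_add, eval_sub, eval_mul, eval_one, eval_pow, eval_X, eval_C, eval_zero] at h
  nlinarith [h]

lemma legendre_deriv_eval_one (n : ℕ) :
    (derivative (legendre n)).eval 1 = (n:ℝ)*((n:ℝ)+1)/2 := by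
  have h := congrArg (eval 1) (legendre_ODE n)
  simp only [eval_add, eval_sub, eval_mul, eval_one, eval_pow, eval_X, eval_C, eval_ofNat,
    eval_zero, legendre_eval_one] at h
  nlinarith [h]

lemma legendre_deriv_eval_neg_one_sq (n : ℕ) :
    ((derivative (legendre n)).eval (-1))^2 = ((n:ℝ)*((n:ℝ)+1)/2)^2 := by
  have h := legendre_deriv_eval_neg n 1
  rw [h, legendre_deriv_eval_one]
  have h1 : ((-1:ℝ)^n)^2 = 1 := by
    rcases Nat.even_or_odd n with he | ho
    · rw [he.neg_one_pow]; norm_num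
    · rw [ho.neg_one_pow]; norm_num
  nlinarith [h1]

lemma legendre_deriv_sq_le_aux (n : ℕ) (hn : 2 ≤ n) (x : ℝ) (hx : -1 ≤ x) (hx' : x ≤ 1) :
    ((derivative (legendre n)).eval x)^2 ≤ ((n:ℝ)*((n:ℝ)+1)/2)^2 := by
  set L : ℝ := (n:ℝ)*((n:ℝ)+1) - 2 with hL
  have hn2 : (2:ℝ) ≤ (n:ℝ) := by exact_mod_cast hn
  have hLpos : 0 < L := by nlinarith
  have hODE0 : ∀ t : ℝ, (1 - t^2) * (derivative (derivative (derivative (legendre n)))).eval t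
      - 4*t*(derivative (derivative (legendre n))).eval t
      + L * (derivative (legendre n)).eval t = 0 := by
    intro t
    have h := congrArg (eval t) (legendre_ODE' n)
    simp only [eval_add, eval_sub, eval_mul, eval_pow, eval_one, eval_C, eval_X, eval_ofNat,
      eval_zero] at h
    rw [← hL] at h
    linarith [h]
  set y : ℝ → ℝ := fun t => (derivative (legendre n)).eval t with hy
  set y1 : ℝ → ℝ := fun t => (derivative (derivative (legendre n))).eval t with hy1
  set y2 : ℝ → ℝ := fun t => (derivative (derivative (derivative (legendre n)))).eval t with hy2
  have hODE : ∀ t : ℝ, (1 - t^2) * y2 t - 4*t*y1 t + L * y t = 0 := hODE0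
  set g : ℝ → ℝ := fun t => (y t)^2 + (1 - t^2) * (y1 t)^2 / L with hg
  have hgd : ∀ t : ℝ, HasDerivAt g (6*t*(y1 t)^2/L) t := by
    intro t
    have h1 : HasDerivAt y (y1 t) t := Polynomial.hasDerivAt _ t
    have h2 : HasDerivAt y1 (y2 t) t := Polynomial.hasDerivAt _ t
    have h3 : HasDerivAt (fun s : ℝ => 1 - s^2) (-(2*t)) t := by
      simpa using ((hasDerivAt_pow 2 t).const_sub 1)
    have h5 := (h1.pow 2).add ((h3.mul (h2.pow 2)).div_const L)
    convert h5 using 1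
    · rfl
    · rfl
    · rfl
    have e := hODE t
    simp only [Pi.pow_apply]
    field_simp
    linear_combination (-2 * y1 t) * e
  have hdiff : Differentiable ℝ g := fun t => (hgd t).differentiableAt
  have hg1 : g 1 = ((n:ℝ)*((n:ℝ)+1)/2)^2 := by
    have : y 1 = (n:ℝ)*((n:ℝ)+1)/2 := legendre_deriv_eval_one n
    simp [hg, this]
  have hgm1 : g (-1) = ((n:ℝ)*((n:ℝ)+1)/2)^2 := by
    have : (y (-1))^2 = ((n:ℝ)*((n:ℝ)+1)/2)^2 := legendre_deriv_eval_neg_one_sq n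
    simp [hg, this]
  have hyg : (y x)^2 ≤ g x := by
    have h1x : 0 ≤ 1 - x^2 := by nlinarith
    have : 0 ≤ (1 - x^2) * (y1 x)^2 / L := by positivity
    simp only [hg]
    linarith
  rcases le_or_gt 0 x with hx0 | hx0
  · have hmono : MonotoneOn g (Set.Icc 0 1) := by
      apply monotoneOn_of_deriv_nonneg (convex_Icc 0 1) hdiff.continuous.continuousOn
      · intro t _; exact (hgd t).differentiableAt.differentiableWithinAt
      · intro t ht
        rw [interior_Icc] at ht
        rw [(hgd t).deriv]
        have : 0 ≤ t := le_of_lt ht.1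
        positivity
    have := hmono (Set.mem_Icc.mpr ⟨hx0, hx'⟩) (Set.mem_Icc.mpr ⟨zero_le_one, le_refl 1⟩) hx'
    calc (y x)^2 ≤ g x := hyg
      _ ≤ g 1 := this
      _ = _ := hg1
  · have hanti : AntitoneOn g (Set.Icc (-1) 0) := by
      apply antitoneOn_of_deriv_nonpos (convex_Icc (-1) 0) hdiff.continuous.continuousOn
      · intro t _; exact (hgd t).differentiableAt.differentiableWithinAt
      · intro t ht
        rw [interior_Icc] at ht
        rw [(hgd t).deriv]
        apply div_nonpos_of_nonpos_of_nonneg _ hLpos.le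
        nlinarith [sq_nonneg (y1 t), ht.2]
    have := hanti (Set.mem_Icc.mpr ⟨le_refl (-1), by linarith⟩)
      (Set.mem_Icc.mpr ⟨hx, hx0.le⟩) hx
    calc (y x)^2 ≤ g x := hyg
      _ ≤ g (-1) := this
      _ = _ := hgm1

lemma legendre_deriv_sq_le (n : ℕ) (hn : 1 ≤ n) (x : ℝ) (hx : -1 ≤ x) (hx' : x ≤ 1) :
    ((derivative (legendre n)).eval x)^2 ≤ ((n:ℝ)*((n:ℝ)+1)/2)^2 := by
  rcases Nat.lt_or_ge n 2 with h2 | h2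
  · have hn1 : n = 1 := by omega
    subst hn1
    norm_num [legendre]
  · exact legendre_deriv_sq_le_aux n h2 x hx hx'

lemma legendre_ODE'_eval (n : ℕ) (t : ℝ) :
    (1 - t^2) * (derivative (derivative (derivative (legendre n)))).eval t
      - 4*t*(derivative (derivative (legendre n))).eval t
      + ((n:ℝ)*((n:ℝ)+1) - 2) * (derivative (legendre n)).eval t = 0 := by
  have h := congrArg (eval t) (legendre_ODE' n)
  simp only [eval_add, eval_sub, eval_mul, eval_pow, eval_one, eval_C, eval_X, eval_ofNat,
    eval_zero] at h
  linarith [h]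

set_option maxHeartbeats 1000000 in
lemma legendre_gronwall (n : ℕ) (x : ℝ) (hx0 : 0 ≤ x) (hx1 : x < 1) :
    Real.sqrt (1-x^2) * ((1-x^2) * ((derivative (legendre n)).eval x)^2
      + ((1-x^2) * (derivative (derivative (legendre n))).eval x
          - 3/2*x*(derivative (legendre n)).eval x)^2 / ((n:ℝ)+1/2)^2)
    ≤ (((derivative (legendre n)).eval 0)^2
        + ((derivative (derivative (legendre n))).eval 0)^2 / ((n:ℝ)+1/2)^2)
      * Real.exp (3/(4*((n:ℝ)+1/2)) * x / Real.sqrt (1-x^2)) := by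
  have hODE0 := legendre_ODE'_eval n
  set y : ℝ → ℝ := fun t => (derivative (legendre n)).eval t with hy
  set y1 : ℝ → ℝ := fun t => (derivative (derivative (legendre n))).eval t with hy1
  set y2 : ℝ → ℝ := fun t => (derivative (derivative (derivative (legendre n)))).eval t with hy2
  set ν : ℝ := (n:ℝ) + 1/2 with hν
  have hνpos : 0 < ν := by positivity
  have hν0 : ν ≠ 0 := hνpos.ne'
  set R : ℝ → ℝ := fun t => (1-t^2) * y1 t - 3/2*t*y t with hR
  set H : ℝ → ℝ := fun t => (1-t^2) * (y t)^2 + (R t)^2/ν^2 with hH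
  set φ : ℝ → ℝ := fun t => 3/(4*ν) * t / Real.sqrt (1-t^2) with hφ
  set F : ℝ → ℝ := fun t => Real.sqrt (1-t^2) * H t * Real.exp (-(φ t)) with hF
  have hODE : ∀ t : ℝ, (1-t^2) * y2 t - 4*t*y1 t + (ν^2 - 9/4) * y t = 0 := by
    intro t
    have h := hODE0 t
    have heq : (n:ℝ)*((n:ℝ)+1) - 2 = ν^2 - 9/4 := by rw [hν]; ring
    rw [heq] at h
    exact h
  clear_value ν
  have main : ∀ t : ℝ, t^2 < 1 → ∃ dF, HasDerivAt F dF t ∧ dF ≤ 0 := by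
    intro t ht
    have hu : 0 < 1 - t^2 := by linarith
    set su : ℝ := Real.sqrt (1-t^2) with hsu'
    have hsu : 0 < su := Real.sqrt_pos.mpr hu
    have hsu2 : su^2 = 1-t^2 := Real.sq_sqrt hu.le
    have h1 : HasDerivAt y (y1 t) t := Polynomial.hasDerivAt _ t
    have h2 : HasDerivAt y1 (y2 t) t := Polynomial.hasDerivAt _ t
    have h3 : HasDerivAt (fun s : ℝ => 1 - s^2) (-(2*t)) t := by
      simpa using ((hasDerivAt_pow 2 t).const_sub 1)
    have hRd : HasDerivAt R (-(2*t)*y1 t + (1-t^2)*y2 t - (3/2*y t + 3/2*t*y1 t)) t := by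
      have h := (h3.mul h2).sub (((hasDerivAt_id t).mul h1).const_mul (3/2))
      convert h using 1
      · rfl
      · rfl
      · rw [hR]; funext s; simp only [Pi.mul_apply, Pi.sub_apply, id_eq]; ring
      · simp only [id_eq]; ring
    set d : ℝ := -(2*t)*(y t)^2 + (1-t^2)*(2*y t*y1 t)
        + 2*R t*(-(2*t)*y1 t + (1-t^2)*y2 t - (3/2*y t + 3/2*t*y1 t))/ν^2 with hd
    have hHd : HasDerivAt H d t := by
      have h := (h3.mul (h1.pow 2)).add ((hRd.pow 2).div_const (ν^2))
      convert h using 1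
      · rfl
      · rfl
      · rfl
      simp only [Pi.pow_apply]
      rw [hd]; push_cast; ring
    have hsqd : HasDerivAt (fun s : ℝ => Real.sqrt (1-s^2)) (-t/su) t := by
      have h := h3.sqrt hu.ne'
      convert h using 1
      rw [← hsu']
      rw [div_eq_div_iff hsu.ne' (by positivity)]
      ring
    have hφd : HasDerivAt φ (3/(4*ν) / ((1-t^2)*su)) t := by
      have hq : HasDerivAt (fun s : ℝ => s / Real.sqrt (1-s^2))
          ((1*Real.sqrt (1-t^2) - t*(-t/su))/(Real.sqrt (1-t^2))^2) t :=
        HasDerivAt.div (hasDerivAt_id t) hsqd (by rw [← hsu']; exact hsu.ne')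
      have h := hq.const_mul (3/(4*ν))
      have heq : φ = fun s : ℝ => 3/(4*ν) * (s / Real.sqrt (1-s^2)) := by
        rw [hφ]; funext s; ring
      rw [heq]
      convert h using 1
      · rfl
      · rfl
      rw [← hsu']
      rw [show (1-t^2) = su^2 from hsu2.symm]
      field_simp
      linear_combination (-1) * hsu2
    have hEd := hsqd.mul hHd
    have hFd := hEd.mul ((hφd.neg).exp)
    simp only [Pi.mul_apply, Pi.neg_apply] at hFd
    rw [← hsu'] at hFd
    clear_value su d
    refine ⟨_, hFd, ?_⟩
    have he : 0 < Real.exp (-(φ t)) := Real.exp_pos _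
    have hs : ν^2 * (ν⁻¹)^2 = 1 := by field_simp
    have hkey : (1-t^2)*d - t*H t = 3/(2*ν^2)*(R t * y t) := by
      have e := hODE t
      simp only [hd, hH, hR]
      linear_combination (2*(1-t^2)*((1-t^2)*(y1 t) - 3/2*t*(y t))/ν^2) * e
        + (3*t*(y t)^2 + 4*t^2*(y t)*(y1 t) - 3*t^3*(y t)^2
            - 2*t^4*(y t)*(y1 t) - 2*(y t)*(y1 t)) * hs
    have hνH : ν^2 * H t = ν^2*su^2*(y t)^2 + (R t)^2 := by
      simp only [hH]
      rw [← hsu2]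
      field_simp
    have hAM : 2*ν*su*(R t * y t) ≤ ν^2 * H t := by
      nlinarith [sq_nonneg (ν*su*y t - R t), hνH]
    have hL : -t/su * H t + su*d = 3*(R t * y t)/(2*ν^2*su) := by
      rw [← hsu2] at hkey
      have hsi : su * su⁻¹ = 1 := mul_inv_cancel₀ hsu.ne'
      rw [eq_div_iff (by positivity)]
      linear_combination 2*ν^2*hkey - 2*ν^2*t*H t*hsi + 3*(R t*y t)*hs
    have hRt : su * H t * (3/(4*ν) / ((1-t^2)*su)) = 3*H t/(4*ν*(1-t^2)) := by
      field_simp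
    have hAB : -t/su * H t + su * d ≤ su * H t * (3/(4*ν) / ((1-t^2)*su)) := by
      rw [hL, hRt, div_le_div_iff₀ (by positivity) (by positivity), ← hsu2]
      have hmul := mul_le_mul_of_nonneg_left hAM (show (0:ℝ) ≤ 6*su by positivity)
      nlinarith [hmul]
    have hval : (-t/su * H t + su * d) * Real.exp (-(φ t))
        + su * H t * (Real.exp (-(φ t)) * -(3/(4*ν) / ((1-t^2)*su)))
        = ((-t/su * H t + su * d) - su * H t * (3/(4*ν) / ((1-t^2)*su)))
          * Real.exp (-(φ t)) := by ring
    rw [hval]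
    exact mul_nonpos_of_nonpos_of_nonneg (by linarith) he.le
  have hsq : ∀ t ∈ Set.Icc 0 x, t^2 < 1 := by
    intro t ht
    have h1 := ht.1
    have h2 := ht.2
    nlinarith
  have hcont : ContinuousOn F (Set.Icc 0 x) := by
    intro t ht
    obtain ⟨dd, hdd, _⟩ := main t (hsq t ht)
    exact hdd.continuousAt.continuousWithinAt
  have hant : AntitoneOn F (Set.Icc 0 x) := by
    apply antitoneOn_of_deriv_nonpos (convex_Icc 0 x) hcont
    · intro t ht
      rw [interior_Icc] at ht
      obtain ⟨dd, hdd, _⟩ := main t (hsq t ⟨ht.1.le, ht.2.le⟩)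
      exact hdd.differentiableAt.differentiableWithinAt
    · intro t ht
      rw [interior_Icc] at ht
      obtain ⟨dd, hdd, hle⟩ := main t (hsq t ⟨ht.1.le, ht.2.le⟩)
      rw [hdd.deriv]
      exact hle
  have hFx : F x ≤ F 0 :=
    hant (Set.mem_Icc.mpr ⟨le_refl 0, hx0⟩) (Set.mem_Icc.mpr ⟨hx0, le_refl x⟩) hx0
  have hF0 : F 0 = H 0 := by
    simp only [hF, hφ]
    norm_num
  have hgoal : Real.sqrt (1-x^2) * H x ≤ H 0 * Real.exp (φ x) := by
    have h1 : Real.sqrt (1-x^2) * H x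
        = (Real.sqrt (1-x^2) * H x * Real.exp (-(φ x))) * Real.exp (φ x) := by
      rw [mul_assoc (Real.sqrt (1-x^2) * H x), ← Real.exp_add]
      simp
    rw [h1]
    have h2 : F x ≤ H 0 := by rw [← hF0]; exact hFx
    exact mul_le_mul_of_nonneg_right h2 (Real.exp_pos _).le
  have hHx : H x = (1-x^2) * (y x)^2
      + ((1-x^2) * y1 x - 3/2*x*y x)^2 / ν^2 := by simp only [hH, hR]
  have hH0 : H 0 = (y 0)^2 + (y1 0)^2 / ν^2 := by
    simp only [hH, hR]
    norm_num
  have hφx : φ x = 3/(4*ν) * x / Real.sqrt (1-x^2) := by simp only [hφ]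
  rw [← hφx, ← hHx, ← hH0]
  exact hgoal

lemma legendre_H0_le (n : ℕ) (hn : 2 ≤ n) :
    ((derivative (legendre n)).eval 0)^2
      + ((derivative (derivative (legendre n))).eval 0)^2 / ((n:ℝ)+1/2)^2
    ≤ 3/4 * n := by
  have hnR : (2:ℝ) ≤ (n:ℝ) := by exact_mod_cast hn
  rcases Nat.even_or_odd n with he | ho
  · -- n even, n = 2m, m ≥ 1 : first term zero
    obtain ⟨m, hm⟩ := he
    have hm1 : 1 ≤ m := by omega
    have hy0 : (derivative (legendre n)).eval 0 = 0 := by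
      have h := legendre_deriv_eval_zero (n-1)
      rw [show n - 1 + 1 = n from by omega] at h
      have hz : (legendre (n-1)).eval 0 = 0 := by
        rw [show n-1 = 2*(m-1)+1 from by omega]
        exact legendre_eval_zero_odd (m-1)
      rw [h, hz, mul_zero]
    have hb := legendre_eval_zero_sq_le m hm1
    rw [show 2*m = n from by omega] at hb
    have hcast : 8*(m:ℝ)+4 = 4*(n:ℝ)+4 := by
      have : (n:ℝ) = 2*(m:ℝ) := by exact_mod_cast (by omega : n = 2*m)
      rw [this]; ring
    rw [hcast] at hb
    have hy1 := legendre_deriv2_eval_zero n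
    rw [hy0, hy1]
    have hB : ((legendre n).eval 0)^2 * (4*(n:ℝ)+4) ≤ 3 := by
      rw [le_div_iff₀ (by positivity)] at hb
      linarith
    norm_num
    rw [div_le_iff₀ (by positivity : (0:ℝ) < ((n:ℝ)+1/2)^2)]
    nlinarith [mul_le_mul_of_nonneg_left hB
      (show (0:ℝ) ≤ (n:ℝ)^2*((n:ℝ)+1)/4 by positivity),
      sq_nonneg ((legendre n).eval 0), sq_nonneg ((n:ℝ)+1/2)]
  · -- n odd, n = 2m+1, m ≥ 1 : second term zero
    obtain ⟨m, hm⟩ := ho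
    have hm1 : 1 ≤ m := by omega
    have hy1 : (derivative (derivative (legendre n))).eval 0 = 0 := by
      have h := legendre_deriv2_eval_zero n
      have hz : (legendre n).eval 0 = 0 := by
        rw [hm]; exact legendre_eval_zero_odd m
      rw [h, hz, mul_zero]
    have hy0 : (derivative (legendre n)).eval 0 = (n:ℝ) * (legendre (n-1)).eval 0 := by
      have h := legendre_deriv_eval_zero (n-1)
      rw [show n - 1 + 1 = n from by omega] at h
      rw [h]
      congr 1
      push_cast [show n - 1 = 2*m from by omega, hm]
      ring
    have hb := legendre_eval_zero_sq_le m hm1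
    rw [show 2*m = n - 1 from by omega] at hb
    have hcast : 8*(m:ℝ)+4 = 4*(n:ℝ) := by
      have : (n:ℝ) = 2*(m:ℝ)+1 := by exact_mod_cast hm
      rw [this]; ring
    rw [hcast] at hb
    rw [hy0, hy1]
    have hB : ((legendre (n-1)).eval 0)^2 * (4*(n:ℝ)) ≤ 3 := by
      rw [le_div_iff₀ (by positivity)] at hb
      linarith
    have hexp : ((n:ℝ) * (legendre (n-1)).eval 0)^2
        = (n:ℝ)^2 * ((legendre (n-1)).eval 0)^2 := by ring
    norm_num
    rw [hexp]
    nlinarith [mul_le_mul_of_nonneg_left hB (show (0:ℝ) ≤ (n:ℝ)/4 by positivity)]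

set_option maxHeartbeats 1000000 in
lemma legendre_main_aux (n : ℕ) (hn : 2 ≤ n) (x : ℝ) (hx0 : 0 ≤ x) (hx1 : x < 1) :
    (1-x^2) * Real.sqrt (1-x^2) * ((derivative (legendre n)).eval x)^2
      ≤ 8/Real.pi * n := by
  have hnR : (2:ℝ) ≤ (n:ℝ) := by exact_mod_cast hn
  have hu : 0 < 1 - x^2 := by nlinarith
  have hsu : 0 < Real.sqrt (1-x^2) := Real.sqrt_pos.mpr hu
  have hsu2 : (Real.sqrt (1-x^2))^2 = 1-x^2 := Real.sq_sqrt hu.le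
  have hν : (0:ℝ) < (n:ℝ)+1/2 := by positivity
  have hpi : Real.pi < 3.15 := Real.pi_lt_d2
  have hpi0 : 0 < Real.pi := Real.pi_pos
  set y : ℝ → ℝ := fun t => (derivative (legendre n)).eval t with hy
  rcases le_or_gt x (((n:ℝ)+1/2) * Real.sqrt (1-x^2)) with hc | hc
  · -- regime 1 : Gronwall bound
    have hg := legendre_gronwall n x hx0 hx1
    have hH0 := legendre_H0_le n hn
    have hHxpos : 0 ≤ ((1-x^2) * (derivative (derivative (legendre n))).eval x
          - 3/2*x*(derivative (legendre n)).eval x)^2 / ((n:ℝ)+1/2)^2 := by positivity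
    have hstep1 : (1-x^2) * Real.sqrt (1-x^2) * (y x)^2
        ≤ Real.sqrt (1-x^2) * ((1-x^2) * (y x)^2
          + ((1-x^2) * (derivative (derivative (legendre n))).eval x
              - 3/2*x*(y x))^2 / ((n:ℝ)+1/2)^2) := by
      have hadd : (1-x^2) * (y x)^2 ≤ (1-x^2) * (y x)^2
          + ((1-x^2) * (derivative (derivative (legendre n))).eval x
              - 3/2*x*(y x))^2 / ((n:ℝ)+1/2)^2 := le_add_of_nonneg_right hHxpos
      calc (1-x^2) * Real.sqrt (1-x^2) * (y x)^2
          = Real.sqrt (1-x^2) * ((1-x^2) * (y x)^2) := by ring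
        _ ≤ _ := mul_le_mul_of_nonneg_left hadd hsu.le
    have hφle : 3/(4*((n:ℝ)+1/2)) * x / Real.sqrt (1-x^2) ≤ 3/4 := by
      rw [div_le_iff₀ hsu]
      calc 3/(4*((n:ℝ)+1/2)) * x ≤ 3/(4*((n:ℝ)+1/2)) * (((n:ℝ)+1/2) * Real.sqrt (1-x^2)) :=
            mul_le_mul_of_nonneg_left hc (by positivity)
        _ = 3/4 * Real.sqrt (1-x^2) := by field_simp
    have hexple : Real.exp (3/(4*((n:ℝ)+1/2)) * x / Real.sqrt (1-x^2)) ≤ Real.exp (3/4) :=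
      Real.exp_le_exp.mpr hφle
    have hH0nonneg : 0 ≤ ((derivative (legendre n)).eval 0)^2
        + ((derivative (derivative (legendre n))).eval 0)^2 / ((n:ℝ)+1/2)^2 := by positivity
    have hstep2 : (((derivative (legendre n)).eval 0)^2
          + ((derivative (derivative (legendre n))).eval 0)^2 / ((n:ℝ)+1/2)^2)
          * Real.exp (3/(4*((n:ℝ)+1/2)) * x / Real.sqrt (1-x^2))
        ≤ (3/4 * n) * Real.exp (3/4) :=
      mul_le_mul hH0 hexple (Real.exp_pos _).le (by positivity)
    have he34 : Real.exp (3/4) ≤ 2.7182818286 := by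
      calc Real.exp (3/4) ≤ Real.exp 1 := Real.exp_le_exp.mpr (by norm_num)
        _ ≤ 2.7182818286 := Real.exp_one_lt_d9.le
    have hfinal : (3/4 * (n:ℝ)) * Real.exp (3/4) ≤ 8/Real.pi * n := by
      have h1 : (3/4 * (n:ℝ)) * Real.exp (3/4) ≤ (3/4 * (n:ℝ)) * 2.7182818286 :=
        mul_le_mul_of_nonneg_left he34 (by positivity)
      have h2 : (8:ℝ)/3.15 ≤ 8/Real.pi := by
        apply div_le_div_of_nonneg_left (by norm_num) hpi0 hpi.le
      have h3 : (3/4 * (n:ℝ)) * 2.7182818286 ≤ 8/3.15 * n := by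
        nlinarith [Nat.cast_nonneg (α := ℝ) n]
      calc (3/4 * (n:ℝ)) * Real.exp (3/4) ≤ (3/4 * (n:ℝ)) * 2.7182818286 := h1
        _ ≤ 8/3.15 * n := h3
        _ ≤ 8/Real.pi * n := mul_le_mul_of_nonneg_right h2 (Nat.cast_nonneg n)
    calc (1-x^2) * Real.sqrt (1-x^2) * (y x)^2 ≤ _ := hstep1
      _ ≤ _ := hg
      _ ≤ (3/4 * n) * Real.exp (3/4) := hstep2
      _ ≤ 8/Real.pi * n := hfinal
  · -- regime 2 : trivial sup bound
    have hsup := legendre_deriv_sq_le n (by omega) x (by linarith) hx1.le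
    have hsu_small : Real.sqrt (1-x^2) < 1/((n:ℝ)+1/2) := by
      rw [lt_div_iff₀ hν]
      nlinarith [hc, hx1]
    have hu_small : 1-x^2 < 1/((n:ℝ)+1/2)^2 := by
      rw [← hsu2]
      calc (Real.sqrt (1-x^2))^2 < (1/((n:ℝ)+1/2))^2 := by
            apply sq_lt_sq' _ hsu_small
            nlinarith
        _ = 1/((n:ℝ)+1/2)^2 := by rw [div_pow, one_pow]
    have hval : (y x)^2 ≤ ((n:ℝ)*((n:ℝ)+1)/2)^2 := hsup
    have hb1 : (1-x^2) * Real.sqrt (1-x^2) * (y x)^2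
        ≤ (1/((n:ℝ)+1/2)^2) * (1/((n:ℝ)+1/2)) * ((n:ℝ)*((n:ℝ)+1)/2)^2 := by
      apply mul_le_mul
      · apply mul_le_mul hu_small.le hsu_small.le hsu.le (by positivity)
      · exact hval
      · exact sq_nonneg _
      · positivity
    have hb2 : (1/((n:ℝ)+1/2)^2) * (1/((n:ℝ)+1/2)) * ((n:ℝ)*((n:ℝ)+1)/2)^2
        ≤ 8/Real.pi * n := by
      have hnu3 : (1/((n:ℝ)+1/2)^2) * (1/((n:ℝ)+1/2)) * ((n:ℝ)*((n:ℝ)+1)/2)^2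
          = (n:ℝ)^2*((n:ℝ)+1)^2/(4*((n:ℝ)+1/2)^3) := by
        field_simp
        ring
      rw [hnu3, show (8:ℝ)/Real.pi*(n:ℝ) = 8*(n:ℝ)/Real.pi from by ring,
        div_le_div_iff₀ (by positivity) hpi0]
      have hkey : Real.pi * ((n:ℝ)*((n:ℝ)+1)^2) ≤ 32*((n:ℝ)+1/2)^3 := by
        have h43 : ((n:ℝ)+1) ≤ 4/3*((n:ℝ)+1/2) := by linarith
        have hstep : (n:ℝ)*((n:ℝ)+1)^2 ≤ 16/9*((n:ℝ)+1/2)^3 := by nlinarith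
        calc Real.pi * ((n:ℝ)*((n:ℝ)+1)^2) ≤ 3.15 * ((n:ℝ)*((n:ℝ)+1)^2) := by
              apply mul_le_mul_of_nonneg_right hpi.le (by positivity)
          _ ≤ 3.15 * (16/9*((n:ℝ)+1/2)^3) := by
              apply mul_le_mul_of_nonneg_left hstep (by norm_num)
          _ ≤ 32*((n:ℝ)+1/2)^3 := by nlinarith
      nlinarith [mul_le_mul_of_nonneg_left hkey (Nat.cast_nonneg (α := ℝ) n)]
    linarith

lemma legendre_rpow_sq (z : ℝ) (hu : 0 < 1 - z^2) :
    ((1-z^2) ^ ((3:ℝ)/4))^2 = (1-z^2) * Real.sqrt (1-z^2) := by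
  rw [← Real.rpow_natCast ((1-z^2)^((3:ℝ)/4)) 2, ← Real.rpow_mul hu.le]
  rw [show (3:ℝ)/4 * ((2:ℕ):ℝ) = 1 + 1/2 by push_cast; ring]
  rw [Real.rpow_add hu, Real.rpow_one, Real.sqrt_eq_rpow]

lemma two_rpow_sq : ((2:ℝ)^((3:ℝ)/2))^2 = 8 := by
  rw [← Real.rpow_natCast ((2:ℝ)^((3:ℝ)/2)) 2, ← Real.rpow_mul (by norm_num : (0:ℝ) ≤ 2)]
  rw [show (3:ℝ)/2 * ((2:ℕ):ℝ) = ((3:ℕ):ℝ) by push_cast; ring, Real.rpow_natCast]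
  norm_num

open Polynomial in
/-- Envelope bound for the derivative of the Legendre polynomial. -/
theorem legendre_deriv_envelope_bound (n : ℕ) (hn : 1 ≤ n) (x : ℝ)
    (hx : -1 < x) (hx' : x < 1) :
    |(derivative (legendre n)).eval x| ≤
      2 ^ ((3 : ℝ) / 2) / Real.sqrt Real.pi *
        (Real.sqrt n / (1 - x ^ 2) ^ ((3 : ℝ) / 4)) := by
  have hpi0 : 0 < Real.pi := Real.pi_pos
  rcases Nat.lt_or_ge n 2 with h1 | h2
  · -- n = 1
    have hn1 : n = 1 := by omega
    subst hn1
    have hder : (derivative (legendre 1)).eval x = 1 := by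
      simp [legendre]
    rw [hder]
    have hu : 0 < 1 - x^2 := by nlinarith
    have hu1 : (1-x^2) ^ ((3:ℝ)/4) ≤ 1 :=
      Real.rpow_le_one hu.le (by nlinarith) (by norm_num)
    have hup : 0 < (1-x^2) ^ ((3:ℝ)/4) := Real.rpow_pos_of_pos hu _
    have hsp : Real.sqrt Real.pi ≤ 2 := by
      rw [show (2:ℝ) = Real.sqrt 4 by
        rw [show (4:ℝ) = 2^2 by norm_num, Real.sqrt_sq (by norm_num : (0:ℝ) ≤ 2)]]
      exact Real.sqrt_le_sqrt (by nlinarith [Real.pi_lt_d2])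
    have hsp0 : 0 < Real.sqrt Real.pi := Real.sqrt_pos.mpr hpi0
    have h2r : (2:ℝ) ≤ 2^((3:ℝ)/2) := by
      nth_rewrite 1 [show (2:ℝ) = 2^(1:ℝ) from (Real.rpow_one 2).symm]
      apply Real.rpow_le_rpow_of_exponent_le (by norm_num) (by norm_num)
    have hfrac : (1:ℝ) ≤ 2^((3:ℝ)/2) / Real.sqrt Real.pi := by
      rw [le_div_iff₀ hsp0]
      linarith
    have hone : (1:ℝ) ≤ Real.sqrt 1 / (1-x^2) ^ ((3:ℝ)/4) := by
      rw [Real.sqrt_one, le_div_iff₀ hup, one_mul]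
      exact hu1
    push_cast
    calc |(1:ℝ)| = 1 := abs_one
      _ ≤ 2^((3:ℝ)/2) / Real.sqrt Real.pi * (Real.sqrt 1 / (1-x^2) ^ ((3:ℝ)/4)) := by
          nlinarith
  · -- n ≥ 2
    have key : ∀ z : ℝ, 0 ≤ z → z < 1 →
        |(derivative (legendre n)).eval z| ≤
          2 ^ ((3:ℝ)/2) / Real.sqrt Real.pi *
            (Real.sqrt n / (1 - z^2) ^ ((3:ℝ)/4)) := by
      intro z hz0 hz1
      have hu : 0 < 1 - z^2 := by nlinarith
      have hsu : 0 < Real.sqrt (1-z^2) := Real.sqrt_pos.mpr hu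
      have haux := legendre_main_aux n h2 z hz0 hz1
      have hRHS2 : (2^((3:ℝ)/2) / Real.sqrt Real.pi * (Real.sqrt n / (1-z^2)^((3:ℝ)/4)))^2
          = 8/Real.pi * n / ((1-z^2) * Real.sqrt (1-z^2)) := by
        rw [mul_pow, div_pow, div_pow, legendre_rpow_sq z hu, two_rpow_sq,
          Real.sq_sqrt hpi0.le, Real.sq_sqrt (Nat.cast_nonneg n)]
        ring
      have hsq : ((derivative (legendre n)).eval z)^2
          ≤ (2^((3:ℝ)/2) / Real.sqrt Real.pi * (Real.sqrt n / (1-z^2)^((3:ℝ)/4)))^2 := by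
        rw [hRHS2, le_div_iff₀ (by positivity)]
        nlinarith [haux]
      have hR0 : 0 ≤ 2^((3:ℝ)/2) / Real.sqrt Real.pi * (Real.sqrt n / (1-z^2)^((3:ℝ)/4)) := by
        positivity
      calc |(derivative (legendre n)).eval z|
          = Real.sqrt (((derivative (legendre n)).eval z)^2) := (Real.sqrt_sq_eq_abs _).symm
        _ ≤ Real.sqrt ((2^((3:ℝ)/2) / Real.sqrt Real.pi
              * (Real.sqrt n / (1-z^2)^((3:ℝ)/4)))^2) := Real.sqrt_le_sqrt hsq
        _ = _ := Real.sqrt_sq hR0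
    rcases le_or_gt 0 x with hx0 | hx0
    · exact key x hx0 hx'
    · have h1 := key (-x) (by linarith) (by linarith)
      have habs : |(derivative (legendre n)).eval x|
          = |(derivative (legendre n)).eval (-x)| := by
        have hp := legendre_deriv_eval_neg n (-x)
        rw [neg_neg] at hp
        rw [hp, abs_mul]
        rw [abs_neg, abs_pow, abs_neg, abs_one, one_pow, one_mul]
      rw [habs]
      simpa [neg_sq] using h1
end

section
/- Let x = x̂·2^{−t} with x̂ ∈ ℤ, t ≥ 0, |x| ≤ 1. Define integers p̂_0 = 2^t, p̂_1 = x̂, and p̂_{n+1} = ⌈((2n+1)·⌈x̂·p̂_n·2^{−t}⌋ − n·p̂_{n−1})/(n+1)⌋, where ⌈u⌋ denotes integer truncation. Then |p̂_n·2^{−t} − P_n(x)| ≤ 0.75·(n+1)(n+2)·2^{−t} for all n ≥ 0. -/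
/-- Truncation of a real number toward zero. -/
noncomputable def trunc (u : ℝ) : ℤ := if 0 ≤ u then ⌊u⌋ else ⌈u⌉

/-- The fixed-point iteration for the Legendre three-term recurrence. -/
noncomputable def phat (xh : ℤ) (t : ℕ) : ℕ → ℤ
  | 0 => 2 ^ t
  | 1 => xh
  | (n + 2) =>
      trunc (((2 * (n : ℝ) + 3) * (trunc ((xh : ℝ) * (phat xh t (n + 1) : ℝ) * 2 ^ (-(t : ℤ))) : ℝ)
        - ((n : ℝ) + 1) * (phat xh t n : ℝ)) / ((n : ℝ) + 2))

/- ### Auxiliary development -/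

noncomputable def legP (x : ℝ) (n : ℕ) : ℝ := (legendre n).eval x

lemma legP_zero (x : ℝ) : legP x 0 = 1 := by simp [legP, legendre]

lemma legP_one (x : ℝ) : legP x 1 = x := by simp [legP, legendre]

lemma legP_rec (x : ℝ) (n : ℕ) :
    legP x (n+2) = ((2*(n:ℝ)+3)*x*legP x (n+1) - ((n:ℝ)+1)*legP x n)/((n:ℝ)+2) := by
  have h2 : ((n:ℝ)+2) ≠ 0 := by positivity
  simp only [legP, legendre, Polynomial.eval_sub, Polynomial.eval_mul, Polynomial.eval_C,
    Polynomial.eval_X]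
  field_simp

lemma trunc_err (u : ℝ) : |(trunc u : ℝ) - u| ≤ 1 := by
  unfold trunc
  rcases le_or_gt 0 u with h | h
  · rw [if_pos h, abs_le]
    constructor <;> push_cast
    · nlinarith [Int.sub_one_lt_floor u, Int.floor_le u]
    · nlinarith [Int.floor_le u, Int.lt_floor_add_one u]
  · rw [if_neg (not_le.mpr h), abs_le]
    constructor <;> push_cast
    · nlinarith [Int.le_ceil u, Int.ceil_lt_add_one u]
    · nlinarith [Int.le_ceil u, Int.ceil_lt_add_one u]

lemma legP_at_one (n : ℕ) : legP 1 n = 1 := by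
  induction n using Nat.strong_induction_on with
  | _ n ih =>
    match n with
    | 0 => exact legP_zero 1
    | 1 => exact legP_one 1
    | (m+2) =>
      rw [legP_rec, ih (m+1) (by omega), ih m (by omega)]
      have h2 : ((m:ℝ)+2) ≠ 0 := by positivity
      field_simp
      ring

lemma legP_at_negone (n : ℕ) : legP (-1) n = (-1)^n := by
  induction n using Nat.strong_induction_on with
  | _ n ih =>
    match n with
    | 0 => simpa using legP_zero (-1)
    | 1 => simpa using legP_one (-1)
    | (m+2) =>
      rw [legP_rec, ih (m+1) (by omega), ih m (by omega)]
      have h2 : ((m:ℝ)+2) ≠ 0 := by positivity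
      field_simp
      ring

lemma legP_xmul (x : ℝ) (j : ℕ) :
    x * legP x j = (((j:ℝ)+1)/(2*(j:ℝ)+1)) * legP x (j+1)
      + ((j:ℝ)/(2*(j:ℝ)+1)) * legP x (j-1) := by
  match j with
  | 0 => simp [legP_zero, legP_one]
  | (m+1) =>
    have h := legP_rec x m
    have h1 : (2*(m:ℝ)+3) ≠ 0 := by positivity
    have h2 : ((m:ℝ)+2) ≠ 0 := by positivity
    have hsub : m + 1 - 1 = m := rfl
    rw [hsub, h]
    push_cast
    field_simp
    ring

lemma abs_legP_le_one {x : ℝ} (hx : |x| ≤ 1) (n : ℕ) : |legP x n| ≤ 1 := by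
  have hx2 : x^2 ≤ 1 := by nlinarith [abs_nonneg x, sq_abs x, abs_le.mp hx]
  rcases eq_or_lt_of_le hx2 with hsq | hsq
  · -- x = 1 or x = -1
    have hcase : x = 1 ∨ x = -1 := by
      have : (x-1)*(x+1) = 0 := by nlinarith
      rcases mul_eq_zero.mp this with h | h
      · exact Or.inl (by linarith)
      · exact Or.inr (by linarith)
    rcases hcase with h | h
    · rw [h, legP_at_one]; norm_num
    · rw [h, legP_at_negone, abs_pow]; norm_num
  · -- interior case via Lyapunov
    have hmono : ∀ m : ℕ,
        (legP x (m+2) - x * legP x (m+1))^2 + (1-x^2) * (legP x (m+1))^2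
        ≤ (legP x (m+1) - x * legP x m)^2 + (1-x^2) * (legP x m)^2 := by
      intro m
      have hrec : legP x (m+2) - x * legP x (m+1)
          = (((m:ℝ)+1)/((m:ℝ)+2)) * (x*(legP x (m+1) - x*legP x m) - (1-x^2)*legP x m) := by
        rw [legP_rec]
        have h2 : ((m:ℝ)+2) ≠ 0 := by positivity
        field_simp
        ring
      have hr : (((m:ℝ)+1)/((m:ℝ)+2))^2 ≤ 1 := by
        rw [div_pow, div_le_one (by positivity)]
        nlinarith [Nat.cast_nonneg (α := ℝ) m]
      set f := legP x (m+1) - x * legP x m with hf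
      set p := legP x m with hp
      have hfp : legP x (m+1) = f + x * p := by rw [hf]; ring
      rw [hrec, hfp, mul_pow]
      have key : (x*f - (1-x^2)*p)^2 + (1-x^2)*(f + x*p)^2 = f^2 + (1-x^2)*p^2 := by ring
      nlinarith [sq_nonneg (x*f - (1-x^2)*p)]
    have hVle : ∀ m : ℕ,
        (legP x (m+1) - x * legP x m)^2 + (1-x^2) * (legP x m)^2 ≤ 1 - x^2 := by
      intro m
      induction m with
      | zero => simp [legP_zero, legP_one]
      | succ i ih => exact le_trans (hmono i) ih
    have h1 : (1-x^2) * (legP x n)^2 ≤ 1 - x^2 := by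
      nlinarith [hVle n, sq_nonneg (legP x (n+1) - x * legP x n)]
    have hpos : 0 < 1 - x^2 := by linarith
    have hle : (legP x n)^2 ≤ 1 := by nlinarith
    nlinarith [sq_abs (legP x n), abs_nonneg (legP x n)]

/-- Legendre-basis coefficients of the fundamental solutions `uu`. -/
noncomputable def cc (k : ℕ) : ℕ → ℕ → ℝ
  | 0, j => if 0 = k ∧ j = 0 then 1 else 0
  | 1, j => if 1 = k ∧ j = 0 then 1 else 0
  | (n+2), j =>
      if n + 2 ≤ k then (if n + 2 = k ∧ j = 0 then 1 else 0)
      else ((2*(n:ℝ)+3)/((n:ℝ)+2)) * (((j:ℝ)/(2*(j:ℝ)-1)) * cc k (n+1) (j-1)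
            + (((j:ℝ)+1)/(2*(j:ℝ)+3)) * cc k (n+1) (j+1))
          - (((n:ℝ)+1)/((n:ℝ)+2)) * cc k n j

/-- Fundamental solutions of the Legendre three-term recurrence. -/
noncomputable def uu (x : ℝ) (k : ℕ) : ℕ → ℝ
  | 0 => if 0 = k then 1 else 0
  | 1 => if 1 = k then 1 else 0
  | (n+2) =>
      if n + 2 ≤ k then (if n + 2 = k then 1 else 0)
      else ((2*(n:ℝ)+3)*x*uu x k (n+1) - ((n:ℝ)+1)*uu x k n)/((n:ℝ)+2)

lemma uu_lt {x : ℝ} {k m : ℕ} (h : m < k) : uu x k m = 0 := by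
  match m with
  | 0 => simp [uu]; omega
  | 1 => simp [uu]; omega
  | (n+2) => simp only [uu, if_pos (le_of_lt h)]; rw [if_neg]; omega

lemma uu_self (x : ℝ) (k : ℕ) : uu x k k = 1 := by
  match k with
  | 0 => simp [uu]
  | 1 => simp [uu]
  | (n+2) => simp [uu]

lemma uu_rec (x : ℝ) {k n : ℕ} (h : k < n + 2) :
    uu x k (n+2) = ((2*(n:ℝ)+3)*x*uu x k (n+1) - ((n:ℝ)+1)*uu x k n)/((n:ℝ)+2) := by
  simp only [uu]; rw [if_neg (by omega)]

lemma cc_lt {k m : ℕ} (h : m < k) (j : ℕ) : cc k m j = 0 := by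
  match m with
  | 0 => simp [cc]; omega
  | 1 => simp [cc]; omega
  | (n+2) => simp only [cc, if_pos (le_of_lt h)]; rw [if_neg]; omega

lemma cc_self (k j : ℕ) : cc k k j = if j = 0 then 1 else 0 := by
  match k with
  | 0 => simp [cc]
  | 1 => simp [cc]
  | (n+2) => simp [cc]

lemma cc_rec {k n : ℕ} (h : k < n + 2) (j : ℕ) :
    cc k (n+2) j = ((2*(n:ℝ)+3)/((n:ℝ)+2)) * (((j:ℝ)/(2*(j:ℝ)-1)) * cc k (n+1) (j-1)
            + (((j:ℝ)+1)/(2*(j:ℝ)+3)) * cc k (n+1) (j+1))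
          - (((n:ℝ)+1)/((n:ℝ)+2)) * cc k n j := by
  simp only [cc]; rw [if_neg (by omega)]

/-- Support: `cc k n j = 0` for `j ≥ n` (when `k ≥ 2`). -/
lemma cc_support {k : ℕ} (hk : 2 ≤ k) : ∀ n j, n ≤ j → cc k n j = 0 := by
  have key : ∀ n, (∀ j, n ≤ j → cc k n j = 0) ∧ (∀ j, n + 1 ≤ j → cc k (n+1) j = 0) := by
    intro n
    induction n with
    | zero =>
      constructor
      · intro j hj; rcases Nat.lt_or_ge 0 k with h | h
        · exact cc_lt h j
        · interval_cases k <;> omega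
      · intro j hj; rcases Nat.lt_or_ge 1 k with h | h
        · exact cc_lt h j
        · omega
    | succ m ih =>
      refine ⟨ih.2, ?_⟩
      intro j hj
      rcases Nat.lt_or_ge (m+2) k with h | h
      · exact cc_lt h j
      rcases Nat.eq_or_lt_of_le h with h' | h'
      · rw [h'.symm, cc_self]; rw [if_neg]; omega
      rw [cc_rec h' j]
      have e1 : cc k (m+1) (j-1) = 0 := ih.2 (j-1) (by omega)
      have e2 : cc k (m+1) (j+1) = 0 := ih.2 (j+1) (by omega)
      have e3 : cc k m j = 0 := ih.1 j (by omega)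
      rw [e1, e2, e3]; ring
  exact fun n => (key n).1

set_option maxHeartbeats 1000000 in
/-- Nonnegativity of the coefficients together with the dominance invariant. -/
lemma cc_nonneg_dom {k : ℕ} (hk : 2 ≤ k) : ∀ n : ℕ,
    (∀ j : ℕ, 0 ≤ cc k n j) ∧ (∀ j : ℕ, 0 ≤ cc k (n+1) j) ∧
    (∀ j : ℕ, ((n:ℝ)+1)*(2*(j:ℝ)+3)*cc k n j ≤ (2*(n:ℝ)+3)*((j:ℝ)+1)*cc k (n+1) (j+1)) := by
  intro n
  induction n with
  | zero =>
    have e0 : ∀ j : ℕ, cc k 0 j = 0 := fun j => cc_lt (by omega) j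
    have e1 : ∀ j : ℕ, cc k 1 j = 0 := fun j => cc_lt (by omega) j
    exact ⟨fun j => le_of_eq (e0 j).symm, fun j => le_of_eq (e1 j).symm,
      fun j => by rw [e0 j, e1 (j+1)]; norm_num⟩
  | succ n ih =>
    obtain ⟨h1, h2, h3⟩ := ih
    have hco : ∀ j : ℕ, 0 ≤ (j:ℝ)/(2*(j:ℝ)-1) := by
      intro j
      rcases Nat.eq_zero_or_pos j with rfl | hj
      · norm_num
      · have : (1:ℝ) ≤ (j:ℝ) := by exact_mod_cast hj
        apply div_nonneg <;> linarith
    -- nonnegativity at n+2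
    have h2' : ∀ j : ℕ, 0 ≤ cc k (n+2) j := by
      intro j
      rcases le_or_gt (n+2) k with hcase | hcase
      · rcases Nat.eq_or_lt_of_le hcase with h' | h'
        · rw [h', cc_self]; split <;> norm_num
        · rw [cc_lt h' j]
      · rw [cc_rec hcase j]
        set X : ℝ := ((j:ℝ)/(2*(j:ℝ)-1)) * cc k (n+1) (j-1) with hX
        set Y : ℝ := (((j:ℝ)+1)/(2*(j:ℝ)+3)) * cc k (n+1) (j+1) with hY
        set C : ℝ := cc k n j with hC
        have hXnn : 0 ≤ X := mul_nonneg (hco j) (h2 (j-1))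
        have hkey : 0 ≤ (2*(n:ℝ)+3)*Y - ((n:ℝ)+1)*C := by
          have hden : (0:ℝ) < 2*(j:ℝ)+3 := by positivity
          have heq : (2*(n:ℝ)+3)*Y - ((n:ℝ)+1)*C
              = ((2*(n:ℝ)+3)*((j:ℝ)+1)*cc k (n+1) (j+1)
                - ((n:ℝ)+1)*(2*(j:ℝ)+3)*C)/(2*(j:ℝ)+3) := by
            rw [hY]; field_simp
          rw [heq]
          exact div_nonneg (by linarith [h3 j]) (le_of_lt hden)
        have hn2 : (0:ℝ) < (n:ℝ)+2 := by positivity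
        have hG : ((2*(n:ℝ)+3)/((n:ℝ)+2)) * (X + Y) - (((n:ℝ)+1)/((n:ℝ)+2)) * C
            = ((2*(n:ℝ)+3)/((n:ℝ)+2))*X
              + (1/((n:ℝ)+2))*((2*(n:ℝ)+3)*Y - ((n:ℝ)+1)*C) := by
          field_simp; ring
        rw [hG]
        have t1 : 0 ≤ ((2*(n:ℝ)+3)/((n:ℝ)+2))*X := mul_nonneg (by positivity) hXnn
        have t2 : (0:ℝ) ≤ 1/((n:ℝ)+2) := by positivity
        nlinarith [mul_nonneg t2 hkey]
    refine ⟨h2, h2', ?_⟩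
    -- dominance at n+1
    intro j
    have hRHSnn : 0 ≤ (2*((n:ℝ)+1)+3)*((j:ℝ)+1)*cc k (n+2) (j+1) :=
      mul_nonneg (by positivity) (h2' (j+1))
    rcases le_or_gt (n+1) j with hs | hs
    · rw [cc_support hk (n+1) j hs]
      push_cast
      push_cast at hRHSnn
      nlinarith [hRHSnn]
    · have hjn : (j:ℝ) ≤ (n:ℝ) := by
        have : j ≤ n := by omega
        exact_mod_cast this
      rcases le_or_gt (n+2) k with hcase | hcase
      · rw [cc_lt (show n+1 < k by omega) j]
        push_cast
        push_cast at hRHSnn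
        nlinarith [hRHSnn]
      · have hr := cc_rec hcase (j+1)
        have hsub : j + 1 - 1 = j := rfl
        rw [hsub] at hr
        push_cast at hr
        set A : ℝ := cc k (n+1) j with hA
        set Y2 : ℝ := (((j:ℝ)+1+1)/(2*((j:ℝ)+1)+3)) * cc k (n+1) (j+1+1) with hY2
        set C2 : ℝ := cc k n (j+1) with hC2
        have hstep : 0 ≤ (2*(n:ℝ)+3)*Y2 - ((n:ℝ)+1)*C2 := by
          have hden : (0:ℝ) < 2*((j:ℝ)+1)+3 := by positivity
          have heq : (2*(n:ℝ)+3)*Y2 - ((n:ℝ)+1)*C2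
              = ((2*(n:ℝ)+3)*((j:ℝ)+1+1)*cc k (n+1) (j+1+1)
                - ((n:ℝ)+1)*(2*((j:ℝ)+1)+3)*C2)/(2*((j:ℝ)+1)+3) := by
            rw [hY2]; field_simp
          rw [heq]
          apply div_nonneg _ (le_of_lt hden)
          have h3' := h3 (j+1)
          push_cast at h3'
          linarith [h3']
        have hn2 : (0:ℝ) < (n:ℝ)+2 := by positivity
        have hj1 : (0:ℝ) < 2*(j:ℝ)+1 := by positivity
        have hdiff : cc k (n+2) (j+1)
            - (2*(n:ℝ)+3)*((j:ℝ)+1)/(((n:ℝ)+2)*(2*(j:ℝ)+1))*A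
            = (1/((n:ℝ)+2))*((2*(n:ℝ)+3)*Y2 - ((n:ℝ)+1)*C2) := by
          rw [hr]
          have e1 : ((j:ℝ)+1)/(2*((j:ℝ)+1)-1) = ((j:ℝ)+1)/(2*(j:ℝ)+1) := by congr 1; ring
          rw [e1]
          field_simp
          ring
        have hlow : (2*(n:ℝ)+3)*((j:ℝ)+1)/(((n:ℝ)+2)*(2*(j:ℝ)+1))*A
            ≤ cc k (n+2) (j+1) := by
          have t2 : (0:ℝ) ≤ 1/((n:ℝ)+2) := by positivity
          nlinarith [mul_nonneg t2 hstep]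
        have hsq : ((j:ℝ)+1)^2 ≤ ((n:ℝ)+2)^2 := by nlinarith
        have harith : ((n:ℝ)+2)^2*(2*(j:ℝ)+1)*(2*(j:ℝ)+3)
            ≤ (2*(n:ℝ)+3)*(2*(n:ℝ)+5)*((j:ℝ)+1)^2 := by nlinarith [hsq]
        have hcpos : 0 ≤ A := h2 j
        have hfinal : ((n:ℝ)+2)*(2*(j:ℝ)+3)*A
            ≤ (2*(n:ℝ)+5)*((j:ℝ)+1)*((2*(n:ℝ)+3)*((j:ℝ)+1)/(((n:ℝ)+2)*(2*(j:ℝ)+1))*A) := by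
          have hpos : (0:ℝ) < ((n:ℝ)+2)*(2*(j:ℝ)+1) := by positivity
          have heq2 : (2*(n:ℝ)+5)*((j:ℝ)+1)*((2*(n:ℝ)+3)*((j:ℝ)+1)/(((n:ℝ)+2)*(2*(j:ℝ)+1))*A)
              = ((2*(n:ℝ)+5)*(2*(n:ℝ)+3)*((j:ℝ)+1)^2*A)/(((n:ℝ)+2)*(2*(j:ℝ)+1)) := by
            field_simp
          rw [heq2, le_div_iff₀ hpos]
          nlinarith [mul_le_mul_of_nonneg_right harith hcpos]
        have hmul : (2*(n:ℝ)+5)*((j:ℝ)+1)*((2*(n:ℝ)+3)*((j:ℝ)+1)/(((n:ℝ)+2)*(2*(j:ℝ)+1))*A)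
            ≤ (2*(n:ℝ)+5)*((j:ℝ)+1)*cc k (n+2) (j+1) :=
          mul_le_mul_of_nonneg_left hlow (by positivity)
        push_cast
        calc ((n:ℝ)+1+1)*(2*(j:ℝ)+3)*A
            = ((n:ℝ)+2)*(2*(j:ℝ)+3)*A := by ring
          _ ≤ (2*(n:ℝ)+5)*((j:ℝ)+1)*((2*(n:ℝ)+3)*((j:ℝ)+1)/(((n:ℝ)+2)*(2*(j:ℝ)+1))*A) := hfinal
          _ ≤ (2*(n:ℝ)+5)*((j:ℝ)+1)*cc k (n+2) (j+1) := hmul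
          _ = (2*((n:ℝ)+1)+3)*((j:ℝ)+1)*cc k (n+2) (j+1) := by ring

set_option maxHeartbeats 1000000 in
/-- Representation of the fundamental solutions in the Legendre basis. -/
lemma uu_rep {k : ℕ} (hk : 2 ≤ k) (x : ℝ) :
    ∀ n, uu x k n = ∑ j ∈ Finset.range (n+1), cc k n j * legP x j := by
  have key : ∀ n, (uu x k n = ∑ j ∈ Finset.range (n+1), cc k n j * legP x j) ∧
      (uu x k (n+1) = ∑ j ∈ Finset.range (n+2), cc k (n+1) j * legP x j) := by
    intro n
    induction n with
    | zero =>
      constructor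
      · rw [uu_lt (show 0 < k by omega)]
        exact (Finset.sum_eq_zero fun j hj => by rw [cc_lt (show 0 < k by omega)]; ring).symm
      · rw [uu_lt (show 1 < k by omega)]
        exact (Finset.sum_eq_zero fun j hj => by rw [cc_lt (show 1 < k by omega)]; ring).symm
    | succ n ih =>
      refine ⟨ih.2, ?_⟩
      rcases lt_trichotomy (n+2) k with hlt | heq | hgt
      · rw [uu_lt hlt]
        exact (Finset.sum_eq_zero fun j hj => by rw [cc_lt hlt]; ring).symm
      · rw [heq, uu_self]
        rw [show n + 1 + 1 + 1 = (n+2) + 1 from rfl]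
        symm
        rw [Finset.sum_eq_single 0]
        · rw [cc_self, if_pos rfl, legP_zero]; ring
        · intro j hj hj0
          rw [cc_self, if_neg hj0]; ring
        · intro h; exact absurd (Finset.mem_range.mpr (by omega)) h
      · rw [uu_rec x hgt, ih.2, ih.1]
        have hx1 : x * ∑ j ∈ Finset.range (n+2), cc k (n+1) j * legP x j
            = ∑ j ∈ Finset.range (n+3),
                ((j:ℝ)/(2*(j:ℝ)-1) * cc k (n+1) (j-1)
                  + ((j:ℝ)+1)/(2*(j:ℝ)+3) * cc k (n+1) (j+1)) * legP x j := by
          rw [Finset.mul_sum]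
          have e1 : ∀ j ∈ Finset.range (n+2), x * (cc k (n+1) j * legP x j)
              = cc k (n+1) j * ((((j:ℝ)+1)/(2*(j:ℝ)+1)) * legP x (j+1))
                + cc k (n+1) j * (((j:ℝ)/(2*(j:ℝ)+1)) * legP x (j-1)) := by
            intro j hj
            calc x * (cc k (n+1) j * legP x j) = cc k (n+1) j * (x * legP x j) := by ring
              _ = _ := by rw [legP_xmul x j]; ring
          rw [Finset.sum_congr rfl e1, Finset.sum_add_distrib]
          have eRHS : ∀ j ∈ Finset.range (n+3),
              ((j:ℝ)/(2*(j:ℝ)-1) * cc k (n+1) (j-1)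
                + ((j:ℝ)+1)/(2*(j:ℝ)+3) * cc k (n+1) (j+1)) * legP x j
              = ((j:ℝ)/(2*(j:ℝ)-1) * cc k (n+1) (j-1)) * legP x j
                + (((j:ℝ)+1)/(2*(j:ℝ)+3) * cc k (n+1) (j+1)) * legP x j := by
            intro j hj; ring
          rw [Finset.sum_congr rfl eRHS, Finset.sum_add_distrib]
          congr 1
          · -- first sums
            conv_rhs => rw [show n + 3 = (n+2) + 1 from rfl, Finset.sum_range_succ']
            have f0 : (((0:ℕ):ℝ)/(2*((0:ℕ):ℝ)-1) * cc k (n+1) (0-1)) * legP x 0 = 0 := by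
              norm_num
            rw [f0, add_zero]
            apply Finset.sum_congr rfl
            intro j hj
            have hsub : j + 1 - 1 = j := rfl
            rw [hsub]
            push_cast
            ring
          · -- second sums
            conv_lhs => rw [show n + 2 = (n+1) + 1 from rfl, Finset.sum_range_succ']
            have h0 : cc k (n+1) 0 * (((0:ℕ):ℝ)/(2*((0:ℕ):ℝ)+1) * legP x (0-1)) = 0 := by
              norm_num
            rw [h0, add_zero]
            have hpad : ∑ j ∈ Finset.range (n+1+1+1),
                (((j:ℝ)+1)/(2*(j:ℝ)+3) * cc k (n+1) (j+1)) * legP x j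
                = ∑ j ∈ Finset.range (n+1),
                (((j:ℝ)+1)/(2*(j:ℝ)+3) * cc k (n+1) (j+1)) * legP x j := by
              symm
              apply Finset.sum_subset (Finset.range_subset_range.mpr (by omega))
              intro j hj hj2
              have : n + 1 ≤ j + 1 := by
                simp only [Finset.mem_range] at hj hj2; omega
              rw [cc_support hk (n+1) (j+1) this]
              ring
            rw [hpad]
            apply Finset.sum_congr rfl
            intro j hj
            push_cast
            ring
        rw [mul_assoc, hx1]
        have hpadb : ∑ j ∈ Finset.range (n+1), cc k n j * legP x j
            = ∑ j ∈ Finset.range (n+3), cc k n j * legP x j := by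
          apply Finset.sum_subset (Finset.range_subset_range.mpr (by omega))
          intro j hj hj2
          have : n ≤ j := by simp only [Finset.mem_range] at hj hj2; omega
          rw [cc_support hk n j this]
          ring
        rw [hpadb]
        rw [show n + 1 + 1 + 1 = n + 3 from rfl]
        rw [Finset.mul_sum, Finset.mul_sum, ← Finset.sum_sub_distrib, Finset.sum_div]
        apply Finset.sum_congr rfl
        intro j hj
        rw [cc_rec hgt j]
        have hn2 : ((n:ℝ)+2) ≠ 0 := by positivity
        field_simp
  exact fun n => (key n).1

lemma uu_one_nonneg {k : ℕ} (hk : 2 ≤ k) (n : ℕ) : 0 ≤ uu 1 k n := by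
  rw [uu_rep hk 1 n]
  apply Finset.sum_nonneg
  intro j hj
  rw [legP_at_one]
  simpa using (cc_nonneg_dom hk n).1 j

lemma uu_abs_le {k : ℕ} (hk : 2 ≤ k) {x : ℝ} (hx : |x| ≤ 1) (n : ℕ) :
    |uu x k n| ≤ uu 1 k n := by
  rw [uu_rep hk x n, uu_rep hk 1 n]
  calc |∑ j ∈ Finset.range (n+1), cc k n j * legP x j|
      ≤ ∑ j ∈ Finset.range (n+1), |cc k n j * legP x j| := Finset.abs_sum_le_sum_abs _ _
    _ ≤ ∑ j ∈ Finset.range (n+1), cc k n j * legP 1 j := by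
        apply Finset.sum_le_sum
        intro j hj
        rw [abs_mul, legP_at_one, mul_one]
        have hcnn := (cc_nonneg_dom hk n).1 j
        rw [abs_of_nonneg hcnn]
        calc cc k n j * |legP x j| ≤ cc k n j * 1 :=
              mul_le_mul_of_nonneg_left (abs_legP_le_one hx j) hcnn
          _ = cc k n j := mul_one _

/-- Harmonic numbers. -/
noncomputable def harm (n : ℕ) : ℝ := ∑ i ∈ Finset.range n, 1/((i:ℝ)+1)

lemma harm_nonneg (n : ℕ) : 0 ≤ harm n :=
  Finset.sum_nonneg fun i _ => by positivity

lemma harm_succ (n : ℕ) : harm (n+1) = harm n + 1/((n:ℝ)+1) := Finset.sum_range_succ _ n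

set_option maxHeartbeats 1000000 in
lemma bsum : ∀ n : ℕ, ∑ k ∈ Finset.Icc 2 n, uu 1 k n = (n:ℝ)*((n:ℝ)+3)/4 - harm n := by
  have key : ∀ n : ℕ, (∑ k ∈ Finset.Icc 2 n, uu 1 k n = (n:ℝ)*((n:ℝ)+3)/4 - harm n) ∧
      (∑ k ∈ Finset.Icc 2 (n+1), uu 1 k (n+1)
        = ((n+1 : ℕ):ℝ)*(((n+1 : ℕ):ℝ)+3)/4 - harm (n+1)) := by
    intro n
    induction n with
    | zero =>
      constructor
      · show ∑ k ∈ Finset.Icc 2 0, uu 1 k 0 = _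
        rw [show Finset.Icc 2 0 = ∅ by rfl]
        simp [harm]
      · rw [show Finset.Icc 2 1 = ∅ by rfl]
        simp [harm]
        norm_num
    | succ n ih =>
      refine ⟨ih.2, ?_⟩
      have hins : Finset.Icc 2 (n+2) = insert (n+2) (Finset.Icc 2 (n+1)) := by
        ext m; simp only [Finset.mem_Icc, Finset.mem_insert]; omega
      have hnotmem : n+2 ∉ Finset.Icc 2 (n+1) := by simp [Finset.mem_Icc]
      rw [hins, Finset.sum_insert hnotmem, uu_self]
      have hrec : ∀ m ∈ Finset.Icc 2 (n+1), uu 1 m (n+2)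
          = ((2*(n:ℝ)+3)*1*uu 1 m (n+1) - ((n:ℝ)+1)*uu 1 m n)/((n:ℝ)+2) := by
        intro m hm
        simp only [Finset.mem_Icc] at hm
        exact uu_rec 1 (by omega)
      rw [Finset.sum_congr rfl hrec]
      have hpad : ∑ m ∈ Finset.Icc 2 (n+1), uu 1 m n = ∑ m ∈ Finset.Icc 2 n, uu 1 m n := by
        symm
        apply Finset.sum_subset
        · intro m hm; simp only [Finset.mem_Icc] at *; omega
        · intro m hm hm2
          simp only [Finset.mem_Icc] at hm hm2
          exact uu_lt (by omega)
      have expand : ∑ m ∈ Finset.Icc 2 (n+1),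
          ((2*(n:ℝ)+3)*1*uu 1 m (n+1) - ((n:ℝ)+1)*uu 1 m n)/((n:ℝ)+2)
          = ((2*(n:ℝ)+3)*(∑ m ∈ Finset.Icc 2 (n+1), uu 1 m (n+1))
            - ((n:ℝ)+1)*(∑ m ∈ Finset.Icc 2 (n+1), uu 1 m n))/((n:ℝ)+2) := by
        rw [Finset.mul_sum, Finset.mul_sum, ← Finset.sum_sub_distrib, Finset.sum_div]
        apply Finset.sum_congr rfl
        intro m hm
        ring
      rw [expand, hpad, ih.1, ih.2]
      rw [harm_succ (n+1), harm_succ n]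
      have hn1 : ((n:ℝ)+1) ≠ 0 := by positivity
      have hn2 : ((n:ℝ)+2) ≠ 0 := by positivity
      push_cast
      field_simp
      ring
  exact fun n => (key n).1

noncomputable def eSeq (xh : ℤ) (t : ℕ) (n : ℕ) : ℝ :=
  (phat xh t n : ℝ) * 2^(-(t:ℤ)) - legP ((xh:ℝ) * 2^(-(t:ℤ))) n

noncomputable def dd (xh : ℤ) (t : ℕ) (m : ℕ) : ℝ :=
  eSeq xh t (m+2) - ((2*(m:ℝ)+3)*((xh:ℝ)*2^(-(t:ℤ)))*eSeq xh t (m+1)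
    - ((m:ℝ)+1)*eSeq xh t m)/((m:ℝ)+2)

lemma eps_pos (t : ℕ) : (0:ℝ) < 2^(-(t:ℤ)) := by positivity

lemma dd_abs_le (xh : ℤ) (t : ℕ) (m : ℕ) : |dd xh t m| ≤ 3 * 2^(-(t:ℤ)) := by
  set ε : ℝ := 2^(-(t:ℤ)) with hε
  have hεpos : (0:ℝ) < ε := eps_pos t
  set x : ℝ := (xh:ℝ) * ε with hx
  set p2 : ℝ := (phat xh t (m+1) : ℝ) with hp2
  set p1 : ℝ := (phat xh t m : ℝ) with hp1
  set q : ℝ := (trunc ((xh:ℝ) * p2 * ε) : ℝ) with hq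
  set Y : ℝ := ((2*(m:ℝ)+3) * q - ((m:ℝ)+1) * p1)/((m:ℝ)+2) with hY
  have hphat : (phat xh t (m+2) : ℝ) = (trunc Y : ℝ) := by
    rw [show phat xh t (m+2) = trunc (((2 * (m:ℝ) + 3) * (trunc ((xh:ℝ) * (phat xh t (m+1) : ℝ) * 2^(-(t:ℤ))) : ℝ)
        - ((m:ℝ) + 1) * (phat xh t m : ℝ)) / ((m:ℝ) + 2)) from rfl]
  have hm2 : ((m:ℝ)+2) ≠ 0 := by positivity
  have hid : dd xh t m = ((trunc Y : ℝ) - Y)*ε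
      + ((2*(m:ℝ)+3)/((m:ℝ)+2))*((q - (xh:ℝ)*p2*ε)*ε) := by
    unfold dd eSeq
    rw [legP_rec]
    rw [hphat]
    rw [← hε, ← hx, ← hp2, ← hp1]
    rw [hY]
    field_simp
    ring
  rw [hid]
  have h1 : |(trunc Y : ℝ) - Y| ≤ 1 := trunc_err Y
  have h2 : |q - (xh:ℝ)*p2*ε| ≤ 1 := trunc_err _
  have hco : (0:ℝ) ≤ (2*(m:ℝ)+3)/((m:ℝ)+2) := by positivity
  have hco2 : (2*(m:ℝ)+3)/((m:ℝ)+2) ≤ 2 := by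
    rw [div_le_iff₀ (by positivity)]
    linarith [Nat.cast_nonneg (α := ℝ) m]
  calc |((trunc Y : ℝ) - Y)*ε + ((2*(m:ℝ)+3)/((m:ℝ)+2))*((q - (xh:ℝ)*p2*ε)*ε)|
      ≤ |((trunc Y : ℝ) - Y)*ε| + |((2*(m:ℝ)+3)/((m:ℝ)+2))*((q - (xh:ℝ)*p2*ε)*ε)| :=
        abs_add_le _ _
    _ = |(trunc Y : ℝ) - Y| * ε + ((2*(m:ℝ)+3)/((m:ℝ)+2))*(|q - (xh:ℝ)*p2*ε| * ε) := by
        rw [abs_mul, abs_mul, abs_mul, abs_of_nonneg (le_of_lt hεpos), abs_of_nonneg hco]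
    _ ≤ 1*ε + 2*(1*ε) := by
        have t1 : |(trunc Y : ℝ) - Y| * ε ≤ 1*ε :=
          mul_le_mul_of_nonneg_right h1 (le_of_lt hεpos)
        have t2 : |q - (xh:ℝ)*p2*ε| * ε ≤ 1*ε :=
          mul_le_mul_of_nonneg_right h2 (le_of_lt hεpos)
        have t3 : ((2*(m:ℝ)+3)/((m:ℝ)+2))*(|q - (xh:ℝ)*p2*ε| * ε) ≤ 2*(1*ε) := by
          apply mul_le_mul hco2 t2 (by positivity) (by norm_num)
        linarith
    _ = 3*ε := by ring

lemma err_rep (xh : ℤ) (t : ℕ) :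
    ∀ n, eSeq xh t n
      = ∑ k ∈ Finset.Icc 2 n, dd xh t (k-2) * uu ((xh:ℝ) * 2^(-(t:ℤ))) k n := by
  have e0 : eSeq xh t 0 = 0 := by
    unfold eSeq
    rw [show phat xh t 0 = 2^t from rfl, legP_zero]
    push_cast
    rw [← zpow_natCast (2:ℝ) t, ← zpow_add₀ (by norm_num : (2:ℝ) ≠ 0)]
    simp
  have e1 : eSeq xh t 1 = 0 := by
    unfold eSeq
    rw [show phat xh t 1 = xh from rfl, legP_one]
    ring
  have key : ∀ n, (eSeq xh t n
      = ∑ k ∈ Finset.Icc 2 n, dd xh t (k-2) * uu ((xh:ℝ) * 2^(-(t:ℤ))) k n) ∧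
      (eSeq xh t (n+1)
      = ∑ k ∈ Finset.Icc 2 (n+1), dd xh t (k-2) * uu ((xh:ℝ) * 2^(-(t:ℤ))) k (n+1)) := by
    set x : ℝ := (xh:ℝ) * 2^(-(t:ℤ)) with hx
    intro n
    induction n with
    | zero =>
      constructor
      · rw [e0, show Finset.Icc 2 0 = ∅ from rfl, Finset.sum_empty]
      · rw [e1, show Finset.Icc 2 1 = ∅ from rfl, Finset.sum_empty]
    | succ n ih =>
      refine ⟨ih.2, ?_⟩
      have hstep : eSeq xh t (n+2)
          = ((2*(n:ℝ)+3)*x*eSeq xh t (n+1) - ((n:ℝ)+1)*eSeq xh t n)/((n:ℝ)+2)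
            + dd xh t n := by
        unfold dd
        ring
      rw [hstep, ih.1, ih.2]
      have hpad : ∑ k ∈ Finset.Icc 2 n, dd xh t (k-2) * uu x k n
          = ∑ k ∈ Finset.Icc 2 (n+1), dd xh t (k-2) * uu x k n := by
        apply Finset.sum_subset
        · intro m hm; simp only [Finset.mem_Icc] at *; omega
        · intro m hm hm2
          simp only [Finset.mem_Icc] at hm hm2
          rw [uu_lt (show n < m by omega)]
          ring
      rw [hpad]
      have hcomb : ((2*(n:ℝ)+3)*x*(∑ k ∈ Finset.Icc 2 (n+1), dd xh t (k-2) * uu x k (n+1))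
            - ((n:ℝ)+1)*(∑ k ∈ Finset.Icc 2 (n+1), dd xh t (k-2) * uu x k n))/((n:ℝ)+2)
          = ∑ k ∈ Finset.Icc 2 (n+1), dd xh t (k-2) * uu x k (n+2) := by
        rw [Finset.mul_sum, Finset.mul_sum, ← Finset.sum_sub_distrib, Finset.sum_div]
        apply Finset.sum_congr rfl
        intro m hm
        simp only [Finset.mem_Icc] at hm
        rw [uu_rec x (show m < n + 2 by omega)]
        ring
      rw [hcomb]
      have hins : Finset.Icc 2 (n+2) = insert (n+2) (Finset.Icc 2 (n+1)) := by
        ext m; simp only [Finset.mem_Icc, Finset.mem_insert]; omega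
      rw [hins, Finset.sum_insert (by simp [Finset.mem_Icc]), uu_self]
      rw [show n + 2 - 2 = n from rfl]
      ring
  exact fun n => (key n).1

/-- Error bound for the fixed-point evaluation of Legendre polynomials. -/
theorem phat_error_bound (xh : ℤ) (t : ℕ)
    (hx : |(xh : ℝ) * 2 ^ (-(t : ℤ))| ≤ 1) (n : ℕ) :
    |(phat xh t n : ℝ) * 2 ^ (-(t : ℤ)) - (legendre n).eval ((xh : ℝ) * 2 ^ (-(t : ℤ)))|
      ≤ 0.75 * ((n : ℝ) + 1) * ((n : ℝ) + 2) * 2 ^ (-(t : ℤ)) := by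
  set ε : ℝ := 2^(-(t:ℤ)) with hε
  have hεpos : (0:ℝ) < ε := eps_pos t
  set x : ℝ := (xh:ℝ) * ε with hxdef
  have hgoal : (phat xh t n : ℝ) * ε - (legendre n).eval x = eSeq xh t n := rfl
  rw [hgoal, err_rep xh t n]
  calc |∑ k ∈ Finset.Icc 2 n, dd xh t (k-2) * uu x k n|
      ≤ ∑ k ∈ Finset.Icc 2 n, |dd xh t (k-2) * uu x k n| := Finset.abs_sum_le_sum_abs _ _
    _ ≤ ∑ k ∈ Finset.Icc 2 n, (3*ε) * uu 1 k n := by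
        apply Finset.sum_le_sum
        intro k hk
        simp only [Finset.mem_Icc] at hk
        rw [abs_mul]
        exact mul_le_mul (dd_abs_le xh t (k-2)) (uu_abs_le hk.1 hx n)
          (abs_nonneg _) (by positivity)
    _ = (3*ε) * ((n:ℝ)*((n:ℝ)+3)/4 - harm n) := by rw [← Finset.mul_sum, bsum n]
    _ ≤ (3*ε) * ((n:ℝ)*((n:ℝ)+3)/4) := by
        apply mul_le_mul_of_nonneg_left _ (by positivity)
        linarith [harm_nonneg n]
    _ ≤ 0.75 * ((n : ℝ) + 1) * ((n : ℝ) + 2) * ε := by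
        nlinarith [Nat.cast_nonneg (α := ℝ) n, hεpos]
end

section
/- For odd degree n = 2d+1, the Legendre polynomial has the expansion P_{2d+1}(x) = (−1)^d · x · Σ_{k=0}^{d} (−1)^k · 2^{−n} · C(n, d−k) · C(n+2k+1, n) · x^{2k}. -/
open Polynomial Finset Nat

noncomputable def Ae (d k : ℕ) : ℝ :=
  (-1) ^ k / 2 ^ (2*d) * ((2*d).choose (d-k)) * ((2*d+2*k).choose (2*d))

noncomputable def Ao (d k : ℕ) : ℝ :=
  (-1 : ℝ) ^ k / 2 ^ (2 * d + 1) * ((2 * d + 1).choose (d - k) : ℝ)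
    * ((2 * d + 2 * k + 2).choose (2 * d + 1) : ℝ)

lemma chooseR' (n k m : ℕ) (h : n = k + m) : (n.choose k : ℝ) = n ! / (k ! * m !) := by
  subst h
  rw [Nat.cast_choose ℝ (Nat.le_add_right k m), Nat.add_sub_cancel_left]

lemma factR (n m : ℕ) (h : n = m + 1) : (n ! : ℝ) = n * m ! := by
  subst h; rw [Nat.factorial_succ]; push_cast; ring

lemma factCongr (n m : ℕ) (h : n = m) : (n ! : ℝ) = m ! := by rw [h]

lemma assembly (n : ℕ) (F G1 G2 : ℕ → ℝ) (h0 : F 0 = -G2 0) (htop : F (n+1) = G1 n)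
    (hmid : ∀ k < n, F (k+1) = G1 k - G2 (k+1)) :
    ∑ k ∈ range (n+2), F k = ∑ k ∈ range (n+1), G1 k - ∑ k ∈ range (n+1), G2 k := by
  rw [Finset.sum_range_succ' F (n+1), Finset.sum_range_succ (fun k => F (k+1)) n,
      Finset.sum_range_succ G1 n, Finset.sum_range_succ' G2 n]
  rw [Finset.sum_congr rfl (fun k hk => hmid k (Finset.mem_range.mp hk)),
      Finset.sum_sub_distrib, h0, htop]
  ring

lemma assembly2 (n : ℕ) (F G1 G2 : ℕ → ℝ) (htop : F (n+1) = G1 (n+1))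
    (hmid : ∀ k < n+1, F k = G1 k - G2 k) :
    ∑ k ∈ range (n+2), F k = ∑ k ∈ range (n+2), G1 k - ∑ k ∈ range (n+1), G2 k := by
  rw [Finset.sum_range_succ F, Finset.sum_range_succ G1,
      Finset.sum_congr rfl (fun k hk => hmid k (Finset.mem_range.mp hk)),
      Finset.sum_sub_distrib, htop]
  ring

lemma evenEdge0 (d : ℕ) (x : ℝ) :
    (-1:ℝ)^(d+1) * (Ae (d+1) 0 * x^(2*0))
    = -((2*(d:ℝ)+1)/(2*(d:ℝ)+2) * ((-1)^d * (Ae d 0 * x^(2*0)))) := by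
  simp only [Ae, Nat.sub_zero]
  rw [show 2*(d+1)+2*0 = 2*(d+1) from by ring, show 2*d+2*0 = 2*d from by ring,
      Nat.choose_self, Nat.choose_self]
  rw [chooseR' (2*(d+1)) (d+1) (d+1) (by ring), chooseR' (2*d) d d (by ring)]
  rw [factR (2*(d+1)) (2*d+1) (by ring), factR (2*d+1) (2*d) (by ring),
      factR (d+1) d rfl]
  have h1 : ((2*d)! : ℝ) ≠ 0 := Nat.cast_ne_zero.mpr (Nat.factorial_ne_zero _)
  have h2 : ((d)! : ℝ) ≠ 0 := Nat.cast_ne_zero.mpr (Nat.factorial_ne_zero _)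
  have h3 : (2:ℝ) ≠ 0 := two_ne_zero
  have h4 : (2*(d:ℝ)+2) ≠ 0 := by positivity
  have h5 : ((d:ℝ)+1) ≠ 0 := by positivity
  field_simp
  push_cast
  ring

lemma evenEdgeTop (d : ℕ) (x : ℝ) :
    (-1:ℝ)^(d+1) * (Ae (d+1) (d+1) * x^(2*(d+1)))
    = (2*(2*(d:ℝ))+3)/(2*(d:ℝ)+2) * ((-1)^d * (Ao d d * x^(2*d+2))) := by
  simp only [Ae, Ao, Nat.sub_self, Nat.choose_zero_right]
  rw [chooseR' (2*(d+1)+2*(d+1)) (2*(d+1)) (2*(d+1)) (by ring),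
      chooseR' (2*d+2*d+2) (2*d+1) (2*d+1) (by ring)]
  rw [factR (2*(d+1)+2*(d+1)) (4*d+3) (by ring), factR (4*d+3) (2*d+2*d+2) (by ring),
      factR (2*(d+1)) (2*d+1) (by ring)]
  have h1 : ((2*d+2*d+2)! : ℝ) ≠ 0 := Nat.cast_ne_zero.mpr (Nat.factorial_ne_zero _)
  have h2 : ((2*d+1)! : ℝ) ≠ 0 := Nat.cast_ne_zero.mpr (Nat.factorial_ne_zero _)
  have h3 : (2:ℝ) ≠ 0 := two_ne_zero
  have h4 : (2*(d:ℝ)+2) ≠ 0 := by positivity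
  field_simp
  push_cast
  ring

lemma evenMid (d k : ℕ) (hk : k < d) (x : ℝ) :
    (-1:ℝ)^(d+1) * (Ae (d+1) (k+1) * x^(2*(k+1)))
    = (2*(2*(d:ℝ))+3)/(2*(d:ℝ)+2) * ((-1)^d * (Ao d k * x^(2*k+2)))
      - (2*(d:ℝ)+1)/(2*(d:ℝ)+2) * ((-1)^d * (Ae d (k+1) * x^(2*(k+1)))) := by
  obtain ⟨a, rfl⟩ : ∃ a, d = a+k+1 := ⟨d-k-1, by omega⟩
  simp only [Ae, Ao, show a+k+1+1-(k+1) = a+1 from by omega,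
    show a+k+1-k = a+1 from by omega, show a+k+1-(k+1) = a from by omega]
  rw [chooseR' (2*(a+k+1+1)) (a+1) (a+2*k+3) (by ring),
      chooseR' (2*(a+k+1+1)+2*(k+1)) (2*(a+k+1+1)) (2*(k+1)) (by ring),
      chooseR' (2*(a+k+1)+1) (a+1) (a+2*k+2) (by ring),
      chooseR' (2*(a+k+1)+2*k+2) (2*(a+k+1)+1) (2*k+1) (by ring),
      chooseR' (2*(a+k+1)) a (a+2*k+2) (by ring),
      chooseR' (2*(a+k+1)+2*(k+1)) (2*(a+k+1)) (2*(k+1)) (by ring)]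
  rw [factR (2*(a+k+1+1)) (2*a+2*k+3) (by ring), factR (2*a+2*k+3) (2*(a+k+1)) (by ring),
      factR (2*(a+k+1+1)+2*(k+1)) (2*a+4*k+5) (by ring),
      factR (2*a+4*k+5) (2*(a+k+1)+2*k+2) (by ring),
      factR (2*(k+1)) (2*k+1) (by ring),
      factR (2*(a+k+1)+1) (2*(a+k+1)) rfl,
      factR (a+1) a rfl,
      factR (a+2*k+3) (a+2*k+2) (by ring),
      factCongr (2*(a+k+1)+2*(k+1)) (2*(a+k+1)+2*k+2) (by ring)]
  have h1 : ((a)! : ℝ) ≠ 0 := Nat.cast_ne_zero.mpr (Nat.factorial_ne_zero _)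
  have h2 : ((a+2*k+2)! : ℝ) ≠ 0 := Nat.cast_ne_zero.mpr (Nat.factorial_ne_zero _)
  have h3 : ((2*(a+k+1))! : ℝ) ≠ 0 := Nat.cast_ne_zero.mpr (Nat.factorial_ne_zero _)
  have h4 : ((2*(a+k+1)+2*k+2)! : ℝ) ≠ 0 := Nat.cast_ne_zero.mpr (Nat.factorial_ne_zero _)
  have h5 : ((2*k+1)! : ℝ) ≠ 0 := Nat.cast_ne_zero.mpr (Nat.factorial_ne_zero _)
  have h6 : (2:ℝ) ≠ 0 := two_ne_zero
  have h7 : (2*((a:ℝ)+(k:ℝ)+1)+2) ≠ 0 := by positivity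
  have h8 : (2*(((a:ℕ)+k+1 : ℕ):ℝ)+2) ≠ 0 := by positivity
  field_simp
  push_cast
  ring

lemma oddTop (d : ℕ) (x : ℝ) :
    (-1:ℝ)^(d+1) * x * (Ao (d+1) (d+1) * x^(2*(d+1)))
    = (2*(2*(d:ℝ)+1)+3)/(2*(d:ℝ)+1+2)
        * (x * ((-1)^(d+1) * (Ae (d+1) (d+1) * x^(2*(d+1))))) := by
  simp only [Ae, Ao, Nat.sub_self, Nat.choose_zero_right]
  rw [chooseR' (2*(d+1)+2*(d+1)+2) (2*(d+1)+1) (2*(d+1)+1) (by ring),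
      chooseR' (2*(d+1)+2*(d+1)) (2*(d+1)) (2*(d+1)) (by ring)]
  rw [factR (2*(d+1)+2*(d+1)+2) (4*d+5) (by ring), factR (4*d+5) (2*(d+1)+2*(d+1)) (by ring),
      factR (2*(d+1)+1) (2*(d+1)) rfl]
  have h1 : ((2*(d+1)+2*(d+1))! : ℝ) ≠ 0 := Nat.cast_ne_zero.mpr (Nat.factorial_ne_zero _)
  have h2 : ((2*(d+1))! : ℝ) ≠ 0 := Nat.cast_ne_zero.mpr (Nat.factorial_ne_zero _)
  have h3 : (2:ℝ) ≠ 0 := two_ne_zero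
  have h4 : (2*(d:ℝ)+1+2) ≠ 0 := by positivity
  field_simp
  push_cast
  ring

lemma oddMid (d k : ℕ) (hk : k < d+1) (x : ℝ) :
    (-1:ℝ)^(d+1) * x * (Ao (d+1) k * x^(2*k))
    = (2*(2*(d:ℝ)+1)+3)/(2*(d:ℝ)+1+2) * (x * ((-1)^(d+1) * (Ae (d+1) k * x^(2*k))))
      - (2*(d:ℝ)+1+1)/(2*(d:ℝ)+1+2) * ((-1)^d * x * (Ao d k * x^(2*k))) := by
  obtain ⟨a, rfl⟩ : ∃ a, d = a+k := ⟨d-k, by omega⟩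
  simp only [Ae, Ao, show a+k+1-k = a+1 from by omega, show a+k-k = a from by omega]
  rw [chooseR' (2*(a+k+1)+1) (a+1) (a+2*k+2) (by ring),
      chooseR' (2*(a+k+1)+2*k+2) (2*(a+k+1)+1) (2*k+1) (by ring),
      chooseR' (2*(a+k+1)) (a+1) (a+2*k+1) (by ring),
      chooseR' (2*(a+k+1)+2*k) (2*(a+k+1)) (2*k) (by ring),
      chooseR' (2*(a+k)+1) a (a+2*k+1) (by ring),
      chooseR' (2*(a+k)+2*k+2) (2*(a+k)+1) (2*k+1) (by ring)]
  rw [factR (2*(a+k+1)+1) (2*(a+k+1)) rfl,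
      factR (2*(a+k+1)) (2*(a+k)+1) (by ring),
      factR (2*(a+k+1)+2*k+2) (2*a+4*k+3) (by ring),
      factR (2*a+4*k+3) (2*a+4*k+2) (by ring),
      factR (a+1) a rfl,
      factR (a+2*k+2) (a+2*k+1) (by ring),
      factR (2*k+1) (2*k) rfl,
      factCongr (2*(a+k+1)+2*k) (2*a+4*k+2) (by ring),
      factCongr (2*(a+k)+2*k+2) (2*a+4*k+2) (by ring)]
  have h1 : ((a)! : ℝ) ≠ 0 := Nat.cast_ne_zero.mpr (Nat.factorial_ne_zero _)
  have h2 : ((a+2*k+1)! : ℝ) ≠ 0 := Nat.cast_ne_zero.mpr (Nat.factorial_ne_zero _)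
  have h3 : ((2*(a+k)+1)! : ℝ) ≠ 0 := Nat.cast_ne_zero.mpr (Nat.factorial_ne_zero _)
  have h4 : ((2*a+4*k+2)! : ℝ) ≠ 0 := Nat.cast_ne_zero.mpr (Nat.factorial_ne_zero _)
  have h5 : ((2*k)! : ℝ) ≠ 0 := Nat.cast_ne_zero.mpr (Nat.factorial_ne_zero _)
  have h6 : (2:ℝ) ≠ 0 := two_ne_zero
  have h7 : (2*((a:ℝ)+(k:ℝ))+1+2) ≠ 0 := by positivity
  have h8 : (2*(((a:ℕ)+k : ℕ):ℝ)+1+2) ≠ 0 := by positivity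
  field_simp
  push_cast
  ring

lemma even_step (d : ℕ) (x : ℝ) :
    (2*(2*(d:ℝ))+3)/(2*(d:ℝ)+2) * (x * ((-1)^d * x * ∑ k ∈ range (d+1), Ao d k * x^(2*k)))
      - (2*(d:ℝ)+1)/(2*(d:ℝ)+2) * ((-1)^d * ∑ k ∈ range (d+1), Ae d k * x^(2*k))
    = (-1:ℝ)^(d+1) * ∑ k ∈ range (d+2), Ae (d+1) k * x^(2*k) := by
  have e1 : (-1:ℝ)^(d+1) * ∑ k ∈ range (d+2), Ae (d+1) k * x^(2*k)
      = ∑ k ∈ range (d+2), (-1:ℝ)^(d+1) * (Ae (d+1) k * x^(2*k)) := by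
    rw [Finset.mul_sum]
  have e2 : (2*(2*(d:ℝ))+3)/(2*(d:ℝ)+2) * (x * ((-1)^d * x * ∑ k ∈ range (d+1), Ao d k * x^(2*k)))
      = ∑ k ∈ range (d+1), (2*(2*(d:ℝ))+3)/(2*(d:ℝ)+2) * ((-1:ℝ)^d * (Ao d k * x^(2*k+2))) := by
    rw [Finset.mul_sum, Finset.mul_sum, Finset.mul_sum]
    exact Finset.sum_congr rfl fun k _ => by ring
  have e3 : (2*(d:ℝ)+1)/(2*(d:ℝ)+2) * ((-1)^d * ∑ k ∈ range (d+1), Ae d k * x^(2*k))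
      = ∑ k ∈ range (d+1), (2*(d:ℝ)+1)/(2*(d:ℝ)+2) * ((-1:ℝ)^d * (Ae d k * x^(2*k))) := by
    rw [Finset.mul_sum, Finset.mul_sum]
  rw [e1, e2, e3]
  exact (assembly d _ _ _ (evenEdge0 d x) (evenEdgeTop d x)
    (fun k hk => evenMid d k hk x)).symm

lemma odd_step (d : ℕ) (x : ℝ) :
    (2*(2*(d:ℝ)+1)+3)/(2*(d:ℝ)+1+2)
        * (x * ((-1)^(d+1) * ∑ k ∈ range (d+2), Ae (d+1) k * x^(2*k)))
      - (2*(d:ℝ)+1+1)/(2*(d:ℝ)+1+2) * ((-1)^d * x * ∑ k ∈ range (d+1), Ao d k * x^(2*k))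
    = (-1:ℝ)^(d+1) * x * ∑ k ∈ range (d+2), Ao (d+1) k * x^(2*k) := by
  have e1 : (-1:ℝ)^(d+1) * x * ∑ k ∈ range (d+2), Ao (d+1) k * x^(2*k)
      = ∑ k ∈ range (d+2), (-1:ℝ)^(d+1) * x * (Ao (d+1) k * x^(2*k)) := by
    rw [Finset.mul_sum]
  have e2 : (2*(2*(d:ℝ)+1)+3)/(2*(d:ℝ)+1+2)
        * (x * ((-1)^(d+1) * ∑ k ∈ range (d+2), Ae (d+1) k * x^(2*k)))
      = ∑ k ∈ range (d+2), (2*(2*(d:ℝ)+1)+3)/(2*(d:ℝ)+1+2)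
          * (x * ((-1:ℝ)^(d+1) * (Ae (d+1) k * x^(2*k)))) := by
    rw [Finset.mul_sum, Finset.mul_sum, Finset.mul_sum]
  have e3 : (2*(d:ℝ)+1+1)/(2*(d:ℝ)+1+2) * ((-1)^d * x * ∑ k ∈ range (d+1), Ao d k * x^(2*k))
      = ∑ k ∈ range (d+1), (2*(d:ℝ)+1+1)/(2*(d:ℝ)+1+2) * ((-1:ℝ)^d * x * (Ao d k * x^(2*k))) := by
    rw [Finset.mul_sum, Finset.mul_sum]
  rw [e1, e2, e3]
  exact (assembly2 d _ _ _ (oddTop d x) (fun k hk => oddMid d k hk x)).symm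

lemma legendre_eval (d : ℕ) :
    (∀ x : ℝ, (legendre (2*d)).eval x = (-1)^d * ∑ k ∈ range (d+1), Ae d k * x^(2*k)) ∧
    (∀ x : ℝ, (legendre (2*d+1)).eval x = (-1)^d * x * ∑ k ∈ range (d+1), Ao d k * x^(2*k)) := by
  induction d with
  | zero =>
    constructor <;> intro x
    · rw [show 2*0 = 0 from rfl, legendre]
      simp [Ae]
    · rw [show 2*0+1 = 1 from rfl, legendre]
      simp [Ao]
  | succ d ih =>
    obtain ⟨ihE, ihO⟩ := ih
    have hE : ∀ x : ℝ, (legendre (2*(d+1))).eval x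
        = (-1)^(d+1) * ∑ k ∈ range (d+2), Ae (d+1) k * x^(2*k) := by
      intro x
      rw [show 2*(d+1) = 2*d+2 from by ring, legendre]
      simp only [eval_sub, eval_mul, eval_C, eval_X]
      rw [ihE x, ihO x]
      push_cast
      exact even_step d x
    refine ⟨hE, ?_⟩
    intro x
    rw [show 2*(d+1)+1 = (2*d+1)+2 from by ring, legendre]
    simp only [eval_sub, eval_mul, eval_C, eval_X]
    rw [ihO x, show 2*d+1+1 = 2*(d+1) from by ring, hE x]
    push_cast
    exact odd_step d x

/-- Expansion of the odd-degree Legendre polynomial in the monomial basis. -/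
theorem legendre_odd_expansion (d : ℕ) (x : ℝ) :
    (legendre (2 * d + 1)).eval x =
      (-1 : ℝ) ^ d * x * ∑ k ∈ Finset.range (d + 1),
        (-1 : ℝ) ^ k / 2 ^ (2 * d + 1) * ((2 * d + 1).choose (d - k) : ℝ)
          * ((2 * d + 2 * k + 2).choose (2 * d + 1) : ℝ) * x ^ (2 * k) := by
  exact (legendre_eval d).2 x
end

section
/- For all complex z, |P_n(z)| ≤ (|z| + √(1+|z|²))^n. -/
/-- Growth bound for Legendre polynomials on the complex plane. -/
theorem legendre_complex_bound (n : ℕ) (z : ℂ) :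
    ‖Polynomial.aeval z (legendre n)‖ ≤
      (‖z‖ + Real.sqrt (1 + ‖z‖ ^ 2)) ^ n := by
  set a := ‖z‖ with ha
  have ha0 : 0 ≤ a := norm_nonneg z
  set r := a + Real.sqrt (1 + a ^ 2) with hrdef
  have hsq : Real.sqrt (1 + a ^ 2) ^ 2 = 1 + a ^ 2 :=
    Real.sq_sqrt (by positivity)
  have hs1 : 1 ≤ Real.sqrt (1 + a ^ 2) := by
    nlinarith [Real.sqrt_nonneg (1 + a ^ 2)]
  have hr1 : 1 ≤ r := by simp only [hrdef]; linarith
  have hr0 : 0 ≤ r := by linarith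
  have hrsq : r ^ 2 = 2 * a * r + 1 := by
    simp only [hrdef]; nlinarith
  induction n using Nat.strong_induction_on with
  | _ n ih =>
    match n with
    | 0 => simp [legendre]
    | 1 => simpa [legendre] using (by linarith : a ≤ r)
    | (m + 2) =>
      have h1 := ih (m + 1) (by omega)
      have h0 := ih m (by omega)
      have hm0 : (0:ℝ) < (m : ℝ) + 2 := by positivity
      have hc1 : (2 * (m : ℝ) + 3) / ((m : ℝ) + 2) ≤ 2 := by
        rw [div_le_iff₀ hm0]; linarith
      have hc1' : (0:ℝ) ≤ (2 * (m : ℝ) + 3) / ((m : ℝ) + 2) := by positivity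
      have hc2 : ((m : ℝ) + 1) / ((m : ℝ) + 2) ≤ 1 := by
        rw [div_le_one hm0]; linarith
      have hc2' : (0:ℝ) ≤ ((m : ℝ) + 1) / ((m : ℝ) + 2) := by positivity
      rw [legendre]
      simp only [map_sub, map_mul, Polynomial.aeval_C, Polynomial.aeval_X]
      calc ‖(algebraMap ℝ ℂ) ((2 * (m:ℝ) + 3) / ((m:ℝ) + 2)) *
              (z * (Polynomial.aeval z) (legendre (m + 1))) -
            (algebraMap ℝ ℂ) (((m:ℝ) + 1) / ((m:ℝ) + 2)) *
              (Polynomial.aeval z) (legendre m)‖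
          ≤ ‖(algebraMap ℝ ℂ) ((2 * (m:ℝ) + 3) / ((m:ℝ) + 2)) *
              (z * (Polynomial.aeval z) (legendre (m + 1)))‖ +
            ‖(algebraMap ℝ ℂ) (((m:ℝ) + 1) / ((m:ℝ) + 2)) *
              (Polynomial.aeval z) (legendre m)‖ := by
            exact norm_sub_le _ _
        _ = ((2 * (m:ℝ) + 3) / ((m:ℝ) + 2)) * (a * ‖(Polynomial.aeval z) (legendre (m + 1))‖) +
            (((m:ℝ) + 1) / ((m:ℝ) + 2)) * ‖(Polynomial.aeval z) (legendre m)‖ := by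
            simp only [norm_mul, Complex.norm_real, Real.norm_eq_abs, Complex.coe_algebraMap]
            rw [abs_of_nonneg hc1', abs_of_nonneg hc2', ha]
        _ ≤ 2 * (a * r ^ (m + 1)) + 1 * r ^ m := by
            have hp1 : (0:ℝ) ≤ ‖(Polynomial.aeval z) (legendre (m+1))‖ :=
              norm_nonneg _
            have hp0 : (0:ℝ) ≤ ‖(Polynomial.aeval z) (legendre m)‖ :=
              norm_nonneg _
            have hrm : (0:ℝ) ≤ r ^ m := by positivity
            have hrm1 : (0:ℝ) ≤ r ^ (m+1) := by positivity
            have A : a * ‖(Polynomial.aeval z) (legendre (m+1))‖ ≤ a * r ^ (m+1) :=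
              mul_le_mul_of_nonneg_left h1 ha0
            have B : (2 * (m:ℝ) + 3) / ((m:ℝ) + 2) * (a * ‖(Polynomial.aeval z) (legendre (m+1))‖) ≤ 2 * (a * r ^ (m+1)) :=
              mul_le_mul hc1 A (by positivity) (by norm_num)
            have Cc : ((m:ℝ) + 1) / ((m:ℝ) + 2) * ‖(Polynomial.aeval z) (legendre m)‖ ≤ 1 * r ^ m :=
              mul_le_mul hc2 h0 hp0 (by norm_num)
            linarith
        _ ≤ r ^ (m + 2) := by
            have : r ^ (m + 2) = r ^ m * (2 * a * r + 1) := by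
              rw [← hrsq]; ring
            rw [this]
            have hrm : (0:ℝ) ≤ r ^ m := by positivity
            have : r ^ (m + 1) = r ^ m * r := by ring
            rw [this]; nlinarith
end

section
/- For all integers n, k ≥ 1, the asymptotic-series coefficient C_{n,k} = Γ(k+1/2)²·Γ(n+1) / (π·2^k·Γ(n+k+3/2)·Γ(k+1)) satisfies C_{n,k} ≤ (1/(π·n^{1/2})) · k!·n!/(2^k·(n+k)!) ≤ (1/(π·n^{1/2})) · k!/(2n)^k. -/
open Real in
private lemma gamma_midpoint {a : ℝ} (ha : 0 < a) :
    Gamma (a + 1 / 2) ^ 2 ≤ Gamma a * Gamma (a + 1) := by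
  have ha1 : (0:ℝ) < a + 1 := by linarith
  have h := Real.convexOn_log_Gamma.2 (Set.mem_Ioi.mpr ha) (Set.mem_Ioi.mpr ha1)
    (by norm_num : (0:ℝ) ≤ 1/2) (by norm_num : (0:ℝ) ≤ 1/2) (by norm_num)
  have hmid : (1/2 : ℝ) • a + (1/2 : ℝ) • (a+1) = a + 1/2 := by
    simp [smul_eq_mul]; ring
  rw [hmid] at h
  simp only [Function.comp_apply, smul_eq_mul] at h
  have hg : 0 < Gamma (a + 1/2) := Real.Gamma_pos_of_pos (by linarith)
  have hga : 0 < Gamma a := Real.Gamma_pos_of_pos ha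
  have hga1 : 0 < Gamma (a+1) := Real.Gamma_pos_of_pos ha1
  have h2 : Real.log (Gamma (a + 1/2) ^ 2) ≤ Real.log (Gamma a * Gamma (a+1)) := by
    rw [Real.log_pow, Real.log_mul hga.ne' hga1.ne']
    push_cast
    linarith
  exact (Real.log_le_log_iff (by positivity) (by positivity)).mp h2

open Real in
/-- Bounds for the coefficients of the asymptotic expansion of Legendre polynomials. -/
theorem asymptotic_coeff_bound (n k : ℕ) (hn : 1 ≤ n) (hk : 1 ≤ k) :
    Gamma ((k : ℝ) + 1 / 2) ^ 2 * Gamma ((n : ℝ) + 1) /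
        (π * 2 ^ k * Gamma ((n : ℝ) + (k : ℝ) + 3 / 2) * Gamma ((k : ℝ) + 1))
      ≤ 1 / (π * Real.sqrt n) * ((k.factorial : ℝ) * (n.factorial : ℝ) /
          (2 ^ k * ((n + k).factorial : ℝ))) ∧
    1 / (π * Real.sqrt n) * ((k.factorial : ℝ) * (n.factorial : ℝ) /
          (2 ^ k * ((n + k).factorial : ℝ)))
      ≤ 1 / (π * Real.sqrt n) * ((k.factorial : ℝ) / (2 * (n : ℝ)) ^ k) := by
  have hn1 : (1:ℝ) ≤ (n:ℝ) := by exact_mod_cast hn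
  have hnpos : (0:ℝ) < n := by linarith
  have hkpos : (0:ℝ) < k := by exact_mod_cast hk
  have hπ := Real.pi_pos
  have hsq : 0 < Real.sqrt n := Real.sqrt_pos.mpr hnpos
  have hG : (0:ℝ) < Gamma ((n:ℝ) + (k:ℝ) + 3/2) := Real.Gamma_pos_of_pos (by linarith)
  have hGk : (0:ℝ) < Gamma ((k:ℝ) + 1/2) := Real.Gamma_pos_of_pos (by linarith)
  have hkf : (0:ℝ) < (k.factorial : ℝ) := by exact_mod_cast k.factorial_pos
  have hnf : (0:ℝ) < (n.factorial : ℝ) := by exact_mod_cast n.factorial_pos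
  have hnkf : (0:ℝ) < ((n+k).factorial : ℝ) := by exact_mod_cast (n+k).factorial_pos
  -- rewrite gamma of naturals
  have hGn : Gamma ((n:ℝ) + 1) = (n.factorial : ℝ) := Real.Gamma_nat_eq_factorial n
  have hGk1 : Gamma ((k:ℝ) + 1) = (k.factorial : ℝ) := Real.Gamma_nat_eq_factorial k
  constructor
  · -- First inequality
    -- key 1: Gamma(k+1/2)^2 ≤ k!^2
    have key1 : Gamma ((k:ℝ) + 1/2) ^ 2 ≤ (k.factorial : ℝ) ^ 2 := by
      have h := gamma_midpoint hkpos
      rw [Real.Gamma_nat_eq_factorial k] at h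
      have hGkk : Gamma (k:ℝ) ≤ (k.factorial : ℝ) := by
        obtain ⟨m, rfl⟩ := Nat.exists_eq_add_of_le hk
        have : ((1 + m : ℕ) : ℝ) = (m : ℝ) + 1 := by push_cast; ring
        rw [this, Real.Gamma_nat_eq_factorial m]
        exact_mod_cast Nat.factorial_le (by omega : m ≤ 1 + m)
      calc Gamma ((k:ℝ) + 1/2) ^ 2 ≤ Gamma (k:ℝ) * (k.factorial : ℝ) := h
        _ ≤ (k.factorial : ℝ) * (k.factorial : ℝ) :=
            mul_le_mul_of_nonneg_right hGkk hkf.le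
        _ = (k.factorial : ℝ) ^ 2 := (sq _).symm
    -- key 2: sqrt n * (n+k)! ≤ Gamma(n+k+3/2)
    have key2 : Real.sqrt n * ((n+k).factorial : ℝ) ≤ Gamma ((n:ℝ) + (k:ℝ) + 3/2) := by
      have ha : (0:ℝ) < (n:ℝ) + (k:ℝ) + 1/2 := by linarith
      have h := gamma_midpoint ha
      have e1 : (n:ℝ) + (k:ℝ) + 1/2 + 1/2 = ((n+k:ℕ):ℝ) + 1 := by push_cast; ring
      have e2 : (n:ℝ) + (k:ℝ) + 1/2 + 1 = (n:ℝ) + (k:ℝ) + 3/2 := by ring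
      rw [e1, e2, Real.Gamma_nat_eq_factorial] at h
      -- Gamma(n+k+3/2) = (n+k+1/2) * Gamma(n+k+1/2)
      have hrec : Gamma ((n:ℝ) + (k:ℝ) + 3/2)
          = ((n:ℝ) + (k:ℝ) + 1/2) * Gamma ((n:ℝ) + (k:ℝ) + 1/2) := by
        have := Real.Gamma_add_one (ne_of_gt ha)
        rw [← this]; ring_nf
      have hGmid : (0:ℝ) < Gamma ((n:ℝ) + (k:ℝ) + 1/2) := Real.Gamma_pos_of_pos ha
      -- square both sides
      have hsqle : (Real.sqrt n * ((n+k).factorial : ℝ))^2 ≤ (Gamma ((n:ℝ)+(k:ℝ)+3/2))^2 := by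
        have h1 : (Real.sqrt n * ((n+k).factorial : ℝ))^2 = (n:ℝ) * ((n+k).factorial : ℝ)^2 := by
          rw [mul_pow, Real.sq_sqrt hnpos.le]
        rw [h1]
        have h2 : ((n+k).factorial : ℝ)^2 ≤ Gamma ((n:ℝ)+(k:ℝ)+1/2) * Gamma ((n:ℝ)+(k:ℝ)+3/2) := h
        calc (n:ℝ) * ((n+k).factorial : ℝ)^2
            ≤ ((n:ℝ)+(k:ℝ)+1/2) * (Gamma ((n:ℝ)+(k:ℝ)+1/2) * Gamma ((n:ℝ)+(k:ℝ)+3/2)) := by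
              apply mul_le_mul (by linarith) h2 (by positivity) (by linarith)
          _ = Gamma ((n:ℝ)+(k:ℝ)+3/2)^2 := by rw [hrec]; ring
      exact le_of_pow_le_pow_left₀ two_ne_zero hG.le hsqle
    -- combine
    have final : Gamma ((k:ℝ)+1/2)^2 * (Real.sqrt n * ((n+k).factorial:ℝ))
        ≤ (k.factorial:ℝ)^2 * Gamma ((n:ℝ)+(k:ℝ)+3/2) :=
      mul_le_mul key1 key2 (by positivity) (by positivity)
    have hR : 1/(π*Real.sqrt n) * ((k.factorial:ℝ) * (n.factorial:ℝ) / (2^k * ((n+k).factorial:ℝ)))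
        = (k.factorial:ℝ) * (n.factorial:ℝ) / (π * Real.sqrt n * (2^k * ((n+k).factorial:ℝ))) := by
      ring
    rw [hGn, hGk1, hR, div_le_div_iff₀ (by positivity) (by positivity)]
    calc Gamma ((k:ℝ)+1/2)^2 * (n.factorial:ℝ) * (π * Real.sqrt n * (2^k * ((n+k).factorial:ℝ)))
        = ((n.factorial:ℝ) * π * 2^k) * (Gamma ((k:ℝ)+1/2)^2 * (Real.sqrt n * ((n+k).factorial:ℝ))) := by
          ring
      _ ≤ ((n.factorial:ℝ) * π * 2^k) * ((k.factorial:ℝ)^2 * Gamma ((n:ℝ)+(k:ℝ)+3/2)) :=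
          mul_le_mul_of_nonneg_left final (by positivity)
      _ = (k.factorial:ℝ) * (n.factorial:ℝ) * (π * 2^k * Gamma ((n:ℝ)+(k:ℝ)+3/2) * (k.factorial:ℝ)) := by
          ring
  · -- Second inequality
    apply mul_le_mul_of_nonneg_left _ (by positivity)
    have hfac : (n.factorial : ℝ) * (n:ℝ)^k ≤ ((n+k).factorial : ℝ) := by
      have h := @Nat.factorial_mul_pow_le_factorial n k
      have : (n:ℝ)^k ≤ ((n+1:ℕ):ℝ)^k := by
        apply pow_le_pow_left₀ hnpos.le; push_cast; linarith
      calc (n.factorial : ℝ) * (n:ℝ)^k ≤ (n.factorial : ℝ) * ((n+1:ℕ):ℝ)^k :=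
            mul_le_mul_of_nonneg_left this hnf.le
        _ ≤ ((n+k).factorial : ℝ) := by exact_mod_cast h
    rw [mul_pow, div_le_div_iff₀ (by positivity) (by positivity)]
    calc (k.factorial:ℝ) * (n.factorial:ℝ) * (2^k * (n:ℝ)^k)
        = (k.factorial:ℝ) * 2^k * ((n.factorial:ℝ) * (n:ℝ)^k) := by ring
      _ ≤ (k.factorial:ℝ) * 2^k * ((n+k).factorial:ℝ) :=
          mul_le_mul_of_nonneg_left hfac (by positivity)
      _ = (k.factorial:ℝ) * ((2:ℝ)^k * ((n+k).factorial:ℝ)) := by ring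
end
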